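/- arXiv:2301.04403 — 3 statements merged into one kernel-verified Lean document; each statement's English description precedes it below -/
import Mathlib

section
/- Let r ≥ 1. There exists C = C(r) > 0 such that for all τ > 0 and all f ∈ H^{r+1}(𝕋): ‖P₁^τ(f)‖_r ≤ C τ² ‖f‖_{r+1}². -/
open MeasureTheory Complex

noncomputable section

local notation "𝕋" => AddCircle (2 * Real.pi)

instance : Fact (0 < 2 * Real.pi) := ⟨by positivity⟩

def fc (f : 𝕋 → ℂ) (k : ℤ) : ℂ := fourierCoeff f k

def sNormSq (α : ℝ) (f : 𝕋 → ℂ) : ℝ :=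
  ∑' k : ℤ, (1 + (k : ℝ) ^ 2) ^ α * ‖fc f k‖ ^ 2

def sNorm (α : ℝ) (f : 𝕋 → ℂ) : ℝ := Real.sqrt (sNormSq α f)

def MemH (α : ℝ) (f : 𝕋 → ℂ) : Prop :=
  MemLp f 2 volume ∧ Summable fun k : ℤ => (1 + (k : ℝ) ^ 2) ^ α * ‖fc f k‖ ^ 2

def mulOp (m : ℤ → ℂ) (f : 𝕋 → ℂ) : 𝕋 → ℂ :=
  fun x => ∑' k : ℤ, m k * fc f k * fourier k x

def cconj (f : 𝕋 → ℂ) : 𝕋 → ℂ := fun x => (starRingEnd ℂ) (f x)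

/-- Bessel potential `J^α`, with symbol `(1+k²)^{α/2}`. -/
def Jop (α : ℝ) : (𝕋 → ℂ) → (𝕋 → ℂ) :=
  mulOp fun k => (((1 + (k : ℝ) ^ 2) ^ (α / 2) : ℝ) : ℂ)

/-- The operator `|∂ₓ|^α`, with symbol `|k|^α` for `k ≠ 0`, annihilating the zero mode. -/
def absD (α : ℝ) : (𝕋 → ℂ) → (𝕋 → ℂ) :=
  mulOp fun k => if k = 0 then 0 else ((|(k : ℝ)| ^ α : ℝ) : ℂ)

/-- `∂ₓ^m` for `m : ℤ`: symbol `(ik)^m` for `k ≠ 0`, annihilating the zero mode. -/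
def Dpow (m : ℤ) : (𝕋 → ℂ) → (𝕋 → ℂ) :=
  mulOp fun k => if k = 0 then 0 else (Complex.I * (k : ℂ)) ^ m

/-- Symbol of `⟨∂ₓ²⟩`: `√(k² + k⁴)`. -/
def brSym (k : ℤ) : ℝ := Real.sqrt ((k : ℝ) ^ 2 + (k : ℝ) ^ 4)

/-- `e^{it∂ₓ²}`, with symbol `e^{-itk²}`. -/
def eitDxx (t : ℝ) : (𝕋 → ℂ) → (𝕋 → ℂ) :=
  mulOp fun k => Complex.exp (-(Complex.I * t * (k : ℂ) ^ 2))

/-- `e^{it∂ₓ²} - 1`, with symbol `e^{-itk²} - 1`. -/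
def eitDxxm1 (t : ℝ) : (𝕋 → ℂ) → (𝕋 → ℂ) :=
  mulOp fun k => Complex.exp (-(Complex.I * t * (k : ℂ) ^ 2)) - 1

/-- `⟨∂ₓ²⟩⁻¹`, symbol `(k²+k⁴)^{-1/2}` for `k ≠ 0`, `0` at `k = 0`. -/
def brInv : (𝕋 → ℂ) → (𝕋 → ℂ) :=
  mulOp fun k => if k = 0 then 0 else (((brSym k)⁻¹ : ℝ) : ℂ)

/-- Symbol of `A = ⟨∂ₓ²⟩ + ∂ₓ²`: `√(k²+k⁴) - k²`. -/
def Asym (k : ℤ) : ℝ := brSym k - (k : ℝ) ^ 2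

/-- `A = ⟨∂ₓ²⟩ + ∂ₓ²`. -/
def Aop : (𝕋 → ℂ) → (𝕋 → ℂ) := mulOp fun k => ((Asym k : ℝ) : ℂ)

/-- `e^{itA} - 1`. -/
def eitAm1 (t : ℝ) : (𝕋 → ℂ) → (𝕋 → ℂ) :=
  mulOp fun k => Complex.exp (Complex.I * t * ((Asym k : ℝ) : ℂ)) - 1

/-- Symbol of `B = ⟨∂ₓ²⟩⁻¹ ∂ₓ²`: `-k²/√(k²+k⁴)` for `k ≠ 0`, `0` at `k = 0`. -/
def Bsym (k : ℤ) : ℝ := if k = 0 then 0 else -(k : ℝ) ^ 2 / brSym k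

/-- `B = ⟨∂ₓ²⟩⁻¹ ∂ₓ²`. -/
def Bop : (𝕋 → ℂ) → (𝕋 → ℂ) := mulOp fun k => ((Bsym k : ℝ) : ℂ)

/-- `e^{it⟨∂ₓ²⟩}`, with symbol `e^{it√(k²+k⁴)}`. -/
def eitBr (t : ℝ) : (𝕋 → ℂ) → (𝕋 → ℂ) :=
  mulOp fun k => Complex.exp (Complex.I * t * ((brSym k : ℝ) : ℂ))

/-- `e^{it⟨∂ₓ²⟩} - 1`. -/
def eitBrm1 (t : ℝ) : (𝕋 → ℂ) → (𝕋 → ℂ) :=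
  mulOp fun k => Complex.exp (Complex.I * t * ((brSym k : ℝ) : ℂ)) - 1

/-- `B^τ = B e^{iτ⟨∂ₓ²⟩}`, as a single multiplier. -/
def Btau (τ : ℝ) : (𝕋 → ℂ) → (𝕋 → ℂ) :=
  mulOp fun k => ((Bsym k : ℝ) : ℂ) * Complex.exp (Complex.I * τ * ((brSym k : ℝ) : ℂ))

/-- `ψ₁(y) = ∫₀¹ e^{ys} ds`. -/
def psi1 (y : ℂ) : ℂ := ∫ s in (0 : ℝ)..1, Complex.exp (y * s)

/-- `ψ₁(it∂ₓ²)`, with symbol `ψ₁(-itk²)`. -/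
def psiOp (t : ℝ) : (𝕋 → ℂ) → (𝕋 → ℂ) :=
  mulOp fun k => psi1 (-(Complex.I * t * (k : ℂ) ^ 2))

/-- Sobolev norm (squared) of a Fourier coefficient sequence. -/
def seqNormSq (α : ℝ) (c : ℤ → ℂ) : ℝ :=
  ∑' k : ℤ, (1 + (k : ℝ) ^ 2) ^ α * ‖c k‖ ^ 2

def seqNorm (α : ℝ) (c : ℤ → ℂ) : ℝ := Real.sqrt (seqNormSq α c)

/-- Fourier coefficients of `P₁^τ(f)`. -/
def P1coef (τ : ℝ) (f : 𝕋 → ℂ) (k : ℤ) : ℂ :=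
  if k = 0 then 0 else
    ∑' k₁ : ℤ, ((k₁ : ℂ) ^ 2 / (k : ℂ) ^ 2) *
      (∫ s in (0 : ℝ)..τ,
        (Complex.exp (-(2 * Complex.I * s * (((k - k₁ : ℤ)) : ℂ) ^ 2)) - 1) *
        (Complex.exp (-(2 * Complex.I * s * (k : ℂ) * (k₁ : ℂ))) - 1)) *
      fc (cconj f) k₁ * fc (cconj f) (k - k₁)

/-- Fourier coefficients of `P₂^τ(f)`. -/
def P2coef (τ : ℝ) (f : 𝕋 → ℂ) (k : ℤ) : ℂ :=
  if k = 0 then 0 else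
    ∑' k₁ : ℤ, ((2 * (k₁ : ℂ) * (((k - k₁ : ℤ)) : ℂ)) / (k : ℂ) ^ 2) *
      (∫ s in (0 : ℝ)..τ,
        (Complex.exp (-(2 * Complex.I * s * (k : ℂ) ^ 2)) - 1) *
        (Complex.exp (2 * Complex.I * s * (k₁ : ℂ) * (((k - k₁ : ℤ)) : ℂ)) - 1)) *
      fc (cconj f) k₁ * fc (cconj f) (k - k₁)

def L1op (τ : ℝ) (f : 𝕋 → ℂ) : 𝕋 → ℂ :=
  (-(Complex.I / 2)) • Dpow (-2) ((eitDxx (2 * τ) (Dpow (-2) (cconj f))) * (Dpow 2 (cconj f)))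
    + (Complex.I / 2) • Dpow (-2) ((Dpow 2 (cconj f)) * (Dpow (-2) (cconj f)))

def L2op (τ : ℝ) (f : 𝕋 → ℂ) : 𝕋 → ℂ :=
  (-(Complex.I / 2)) • eitDxx τ (Dpow (-3) ((eitDxx τ (Dpow 1 (cconj f))) * (eitDxx (-τ) (cconj f))))
    + (Complex.I / 2) • Dpow (-3) ((Dpow 1 (cconj f)) * (cconj f))
    - (τ : ℂ) • Dpow (-2) ((Dpow 2 (cconj f)) * (cconj f))

def L3op (τ : ℝ) (f : 𝕋 → ℂ) : 𝕋 → ℂ :=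
  (-Complex.I) • Dpow (-4) (eitDxxm1 (2 * τ) ((Dpow 1 (cconj f)) * (Dpow 1 (cconj f))))

def L4op (τ : ℝ) (f : 𝕋 → ℂ) : 𝕋 → ℂ :=
  Complex.I • Dpow (-2) (eitDxx (-τ) ((eitDxx τ (cconj f)) * (eitDxx τ (cconj f))))
    - Complex.I • Dpow (-2) ((cconj f) * (cconj f))
    - ((2 * τ : ℝ) : ℂ) • Dpow (-2) ((Dpow 1 (cconj f)) * (Dpow 1 (cconj f)))

def I1op (τ : ℝ) (f : 𝕋 → ℂ) : 𝕋 → ℂ :=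
  (Complex.I / 2) • ((Dpow (-1) f) * (Dpow (-1) f)
    - eitDxx τ ((eitDxx (-τ) (Dpow (-1) f)) * (eitDxx (-τ) (Dpow (-1) f))))

def I2op (τ : ℝ) (f : 𝕋 → ℂ) : 𝕋 → ℂ :=
  (-(Complex.I / 2)) • eitDxx τ (Dpow (-1) ((eitDxx (-τ) f) * (eitDxx τ (Dpow (-1) (cconj f)))))
    + (Complex.I / 2) • Dpow (-1) (f * (Dpow (-1) (cconj f)))
    + fun _ => ((τ * sNormSq 0 f : ℝ) : ℂ)

/-- The first-order low regularity exponential integrator `Ψ₁^τ` at time level `t_n`. -/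
def Psi1 (τ a b tn : ℝ) (f : 𝕋 → ℂ) : 𝕋 → ℂ :=
  eitBr τ f
    - (Complex.I / 4) • Btau τ ((2 : ℂ) • L1op τ f + (2 : ℂ) • L2op τ f + L3op τ f
        + L4op τ f + I1op τ f + (2 : ℂ) • I2op τ f)
    - (Complex.I * τ * ((a * tn + b : ℝ) : ℂ)) • Btau τ (f + psiOp (2 * τ) (cconj f))

/-- The additional-regularity exponent `p(r)` (with parameter `ε` standing for `+`). -/
def preg (ε r : ℝ) : ℝ :=
  if r = 1 then 1
  else if r ≤ 7/6 then 3 - 2*r + ε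
  else if r ≤ 17/12 then 2/3
  else if r ≤ 3/2 then 7/2 - 2*r + ε
  else if r < 5/2 then 5/4 - r/2
  else if r = 5/2 then ε
  else 0

/-- The additional-regularity exponent `q(r)` for `P₂`. -/
def qreg (r : ℝ) : ℝ := if r ≤ 5/2 then 5/4 - r/2 else 0


/-! ### Auxiliary lemmas for `stmt13` -/

section Stmt13Aux

open Complex in
/-- Cauchy–Schwarz for tsums of nonneg reals. -/
lemma tsum_cs {ι : Type*} (u v : ι → ℝ) (hu0 : ∀ i, 0 ≤ u i) (hv0 : ∀ i, 0 ≤ v i)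
    (hu : Summable (fun i => u i ^ 2)) (hv : Summable (fun i => v i ^ 2)) :
    Summable (fun i => u i * v i) ∧
      ∑' i, u i * v i ≤ Real.sqrt (∑' i, u i ^ 2) * Real.sqrt (∑' i, v i ^ 2) := by
  have key : ∀ s : Finset ι, ∑ i ∈ s, u i * v i ≤
      Real.sqrt (∑' i, u i ^ 2) * Real.sqrt (∑' i, v i ^ 2) := by
    intro s
    refine (Real.sum_mul_le_sqrt_mul_sqrt s u v).trans ?_
    have h1 : ∑ i ∈ s, u i ^ 2 ≤ ∑' i, u i ^ 2 :=
      Summable.sum_le_tsum s (fun i _ => by positivity) hu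
    have h2 : ∑ i ∈ s, v i ^ 2 ≤ ∑' i, v i ^ 2 :=
      Summable.sum_le_tsum s (fun i _ => by positivity) hv
    exact mul_le_mul (Real.sqrt_le_sqrt h1) (Real.sqrt_le_sqrt h2)
      (Real.sqrt_nonneg _) (Real.sqrt_nonneg _)
  have hs : Summable (fun i => u i * v i) :=
    summable_of_sum_le (fun i => mul_nonneg (hu0 i) (hv0 i)) key
  exact ⟨hs, Summable.tsum_le_of_sum_le hs key⟩

lemma norm_exp_I_mul_sub_one_le_abs (x : ℝ) :
    ‖Complex.exp (Complex.I * x) - 1‖ ≤ |x| := by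
  have h : Complex.exp (Complex.I * x) - 1
      = Complex.ofReal (Real.cos x - 1) + Complex.ofReal (Real.sin x) * Complex.I := by
    rw [mul_comm, Complex.exp_mul_I]
    push_cast [Complex.ofReal_cos, Complex.ofReal_sin]; ring
  have hns : ‖Complex.exp (Complex.I * x) - 1‖ ^ 2 = (Real.cos x - 1)^2 + (Real.sin x)^2 := by
    rw [h, Complex.sq_norm, Complex.normSq_add_mul_I]
  have hcos : 1 - x^2/2 ≤ Real.cos x := Real.one_sub_sq_div_two_le_cos
  have hb : ‖Complex.exp (Complex.I * x) - 1‖ ^ 2 ≤ x ^ 2 := by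
    rw [hns]
    have h1 : (Real.cos x - 1)^2 + (Real.sin x)^2 = 2 - 2 * Real.cos x := by
      have := Real.sin_sq_add_cos_sq x; nlinarith [this]
    rw [h1]; nlinarith
  calc ‖Complex.exp (Complex.I * x) - 1‖
      = Real.sqrt (‖Complex.exp (Complex.I * x) - 1‖ ^ 2) := by
        rw [Real.sqrt_sq (norm_nonneg _)]
    _ ≤ Real.sqrt (x ^ 2) := Real.sqrt_le_sqrt hb
    _ = |x| := Real.sqrt_sq_eq_abs x

lemma norm_exp_I_mul_sub_one_le_two (x : ℝ) :
    ‖Complex.exp (Complex.I * x) - 1‖ ≤ 2 := by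
  have h1 : ‖Complex.exp (Complex.I * x)‖ = 1 := by
    rw [mul_comm, Complex.norm_exp_ofReal_mul_I]
  calc ‖Complex.exp (Complex.I * x) - 1‖ ≤ ‖Complex.exp (Complex.I * x)‖ + ‖(1:ℂ)‖ :=
        norm_sub_le _ _
    _ = 2 := by rw [h1]; norm_num

lemma integral_bound_13 (τ : ℝ) (hτ : 0 < τ) (k k₁ : ℤ) :
    ‖∫ s in (0:ℝ)..τ,
        (Complex.exp (-(2 * Complex.I * s * (((k - k₁ : ℤ)) : ℂ) ^ 2)) - 1) *
        (Complex.exp (-(2 * Complex.I * s * (k : ℂ) * (k₁ : ℂ))) - 1)‖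
      ≤ 4 * τ^2 * min (((k - k₁ : ℤ) : ℝ)^2) (|(k:ℝ)| * |(k₁:ℝ)|) := by
  set m : ℝ := min (((k - k₁ : ℤ) : ℝ)^2) (|(k:ℝ)| * |(k₁:ℝ)|) with hm
  have hbound : ∀ s ∈ Set.uIoc (0:ℝ) τ,
      ‖(Complex.exp (-(2 * Complex.I * s * (((k - k₁ : ℤ)) : ℂ) ^ 2)) - 1) *
        (Complex.exp (-(2 * Complex.I * s * (k : ℂ) * (k₁ : ℂ))) - 1)‖ ≤ 4 * τ * m := by
    intro s hs
    rw [Set.uIoc_of_le hτ.le] at hs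
    obtain ⟨hs0, hsτ⟩ := hs
    have e1 : -(2 * Complex.I * s * (((k - k₁ : ℤ)) : ℂ) ^ 2)
        = Complex.I * ((-(2 * s * (((k - k₁ : ℤ) : ℝ))^2) : ℝ) : ℂ) := by push_cast; ring
    have e2 : -(2 * Complex.I * s * (k : ℂ) * (k₁ : ℂ))
        = Complex.I * ((-(2 * s * (k:ℝ) * (k₁:ℝ)) : ℝ) : ℂ) := by push_cast; ring
    rw [e1, e2, norm_mul]
    rcases min_cases (((k - k₁ : ℤ) : ℝ)^2) (|(k:ℝ)| * |(k₁:ℝ)|) with ⟨hmv, hle⟩ | ⟨hmv, hle⟩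
    · have h1 : ‖Complex.exp (Complex.I * ((-(2 * s * (((k - k₁ : ℤ) : ℝ))^2) : ℝ) : ℂ)) - 1‖
          ≤ 2 * s * (((k - k₁ : ℤ) : ℝ))^2 := by
        refine (norm_exp_I_mul_sub_one_le_abs _).trans_eq ?_
        rw [abs_neg, _root_.abs_of_nonneg (by positivity)]
      have h2 := norm_exp_I_mul_sub_one_le_two (-(2 * s * (k:ℝ) * (k₁:ℝ)))
      calc _ ≤ (2 * s * (((k - k₁ : ℤ) : ℝ))^2) * 2 :=
            mul_le_mul h1 h2 (norm_nonneg _) (by positivity)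
        _ ≤ 4 * τ * m := by rw [hm, hmv]; nlinarith [sq_nonneg (((k - k₁ : ℤ) : ℝ))]
    · have h1 := norm_exp_I_mul_sub_one_le_two (-(2 * s * (((k - k₁ : ℤ) : ℝ))^2))
      have h2 : ‖Complex.exp (Complex.I * ((-(2 * s * (k:ℝ) * (k₁:ℝ)) : ℝ) : ℂ)) - 1‖
          ≤ 2 * s * (|(k:ℝ)| * |(k₁:ℝ)|) := by
        refine (norm_exp_I_mul_sub_one_le_abs _).trans_eq ?_
        rw [abs_neg]
        rw [show |2 * s * (k:ℝ) * (k₁:ℝ)| = 2 * s * (|(k:ℝ)| * |(k₁:ℝ)|) by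
          rw [abs_mul, abs_mul, abs_mul]
          rw [_root_.abs_of_nonneg (by norm_num : (0:ℝ) ≤ 2), _root_.abs_of_nonneg hs0.le]; ring]
      calc _ ≤ 2 * (2 * s * (|(k:ℝ)| * |(k₁:ℝ)|)) :=
            mul_le_mul h1 h2 (norm_nonneg _) (by positivity)
        _ ≤ 4 * τ * m := by
            rw [hm, hmv]
            nlinarith [mul_nonneg (abs_nonneg (k:ℝ)) (abs_nonneg (k₁:ℝ))]
  calc ‖∫ s in (0:ℝ)..τ, _‖ ≤ (4 * τ * m) * |τ - 0| :=
        intervalIntegral.norm_integral_le_of_norm_le_const hbound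
    _ = 4 * τ^2 * m := by rw [sub_zero, _root_.abs_of_pos hτ]; ring

lemma min_bound_13 (k k₁ : ℤ) :
    min (((k - k₁ : ℤ) : ℝ)^2) (|(k:ℝ)| * |(k₁:ℝ)|)
      ≤ 2 * |(k:ℝ)| * Real.sqrt (1 + ((k - k₁ : ℤ) : ℝ)^2) := by
  set a := |(k:ℝ)| with ha
  set c := |((k - k₁ : ℤ) : ℝ)| with hc
  have ha0 : 0 ≤ a := abs_nonneg _
  have hc0 : 0 ≤ c := abs_nonneg _
  have hcsq : ((k - k₁ : ℤ) : ℝ)^2 = c^2 := (_root_.sq_abs _).symm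
  have hs : c ≤ Real.sqrt (1 + ((k - k₁ : ℤ) : ℝ)^2) := by
    rw [hcsq]
    calc c = Real.sqrt (c^2) :=  (Real.sqrt_sq hc0).symm
      _ ≤ _ := Real.sqrt_le_sqrt (by nlinarith)
  have hs0 : 0 ≤ Real.sqrt (1 + ((k - k₁ : ℤ) : ℝ)^2) := Real.sqrt_nonneg _
  have htri : |(k₁:ℝ)| ≤ a + c := by
    have h2 : (k₁ : ℝ) = (k:ℝ) - ((k - k₁ : ℤ) : ℝ) := by push_cast; ring
    rw [h2]; exact (abs_sub _ _)
  rcases le_or_gt c (2*a) with hca | hca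
  · refine (min_le_left _ _).trans ?_
    rw [hcsq]
    rw [hcsq] at hs
    nlinarith [mul_le_mul_of_nonneg_left hs ha0]
  · refine (min_le_right _ _).trans ?_
    have h1 : |(k:ℝ)| * |(k₁:ℝ)| ≤ a * (a + c) :=
      mul_le_mul_of_nonneg_left htri ha0
    nlinarith [mul_le_mul_of_nonneg_left hs ha0]

lemma symbol_bound_13 (r : ℝ) (hr : 1 ≤ r) (k k₁ : ℤ) (hk : k ≠ 0) :
    (1 + (k:ℝ)^2)^(r/2) * ((k₁:ℝ)^2 / (k:ℝ)^2)
        * min (((k - k₁ : ℤ) : ℝ)^2) (|(k:ℝ)| * |(k₁:ℝ)|)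
      ≤ 2^((r+2)/2) * ((1 + (k₁:ℝ)^2)^((r+1)/2) * (1 + ((k - k₁ : ℤ) : ℝ)^2)^(r/2)) := by
  have hm := min_bound_13 k k₁
  set m : ℝ := min (((k - k₁ : ℤ) : ℝ)^2) (|(k:ℝ)| * |(k₁:ℝ)|) with hmd
  set w0 : ℝ := 1 + (k:ℝ)^2 with hw0
  set w1 : ℝ := 1 + (k₁:ℝ)^2 with hw1
  set w2 : ℝ := 1 + ((k - k₁ : ℤ) : ℝ)^2 with hw2
  set e : ℝ := (r-1)/2 with hed
  have hw0p : (0:ℝ) < w0 := by positivity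
  have hw1p : (0:ℝ) < w1 := by positivity
  have hw2p : (0:ℝ) < w2 := by positivity
  have hm0 : 0 ≤ m := le_min (sq_nonneg _) (by positivity)
  have hk2 : (1:ℝ) ≤ (k:ℝ)^2 := by
    have h2 : (1:ℤ) ≤ k^2 := by
      rcases lt_or_gt_of_ne hk with h | h <;> nlinarith
    exact_mod_cast h2
  have hkpos : (0:ℝ) < (k:ℝ)^2 := by linarith
  have he : (0:ℝ) ≤ e := by rw [hed]; linarith
  have h2w : w0 ≤ 2 * (w1 * w2) := by
    have hks : (k:ℝ) = (k₁:ℝ) + ((k - k₁ : ℤ) : ℝ) := by push_cast; ring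
    rw [hw0, hw1, hw2, hks]
    nlinarith [sq_nonneg ((k₁:ℝ) - ((k - k₁ : ℤ) : ℝ)), sq_nonneg ((k₁:ℝ) * ((k - k₁ : ℤ) : ℝ))]
  have hA : w0^e ≤ 2^e * (w1^e * w2^e) := by
    calc w0^e ≤ (2 * (w1 * w2))^e := Real.rpow_le_rpow hw0p.le h2w he
      _ = 2^e * (w1 * w2)^e := Real.mul_rpow (by norm_num) (by positivity)
      _ = 2^e * (w1^e * w2^e) := by rw [Real.mul_rpow hw1p.le hw2p.le]
  have hB : w0^((1:ℝ)/2) ≤ Real.sqrt 2 * |(k:ℝ)| := by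
    calc w0^((1:ℝ)/2) = Real.sqrt w0 := (Real.sqrt_eq_rpow w0).symm
      _ ≤ Real.sqrt (2 * (k:ℝ)^2) := Real.sqrt_le_sqrt (by rw [hw0]; linarith)
      _ = Real.sqrt 2 * |(k:ℝ)| := by
          rw [Real.sqrt_mul (by norm_num), Real.sqrt_sq_eq_abs]
  have hstep0 : w0^(r/2) ≤ 2^e * (w1^e * w2^e) * (Real.sqrt 2 * |(k:ℝ)|) := by
    have hsp : w0^(r/2) = w0^e * w0^((1:ℝ)/2) := by
      rw [← Real.rpow_add hw0p]; congr 1; rw [hed]; ring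
    rw [hsp]
    exact mul_le_mul hA hB (Real.rpow_nonneg hw0p.le _) (by positivity)
  have hk1w : (k₁:ℝ)^2 ≤ w1 := by rw [hw1]; linarith
  have e1 : (2:ℝ)^((r+2)/2) = 2^e * 2 * Real.sqrt 2 := by
    rw [Real.sqrt_eq_rpow]
    rw [show (2:ℝ) ^ e * 2 = 2^e * 2^(1:ℝ) by rw [Real.rpow_one]]
    rw [← Real.rpow_add (by norm_num), ← Real.rpow_add (by norm_num)]
    congr 1; rw [hed]; ring
  have e2 : w1^((r+1)/2) = w1^e * w1 := by
    rw [show w1 ^ e * w1 = w1^e * w1^(1:ℝ) by rw [Real.rpow_one]]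
    rw [← Real.rpow_add hw1p]; congr 1; rw [hed]; ring
  have e3 : w2^(r/2) = w2^e * Real.sqrt w2 := by
    rw [Real.sqrt_eq_rpow, ← Real.rpow_add hw2p]; congr 1; rw [hed]; ring
  have hrewrite : w0^(r/2) * ((k₁:ℝ)^2 / (k:ℝ)^2) * m
      = w0^(r/2) * (k₁:ℝ)^2 * m / (k:ℝ)^2 := by ring
  rw [hrewrite, div_le_iff₀ hkpos]
  calc w0^(r/2) * (k₁:ℝ)^2 * m
      ≤ 2^e * (w1^e * w2^e) * (Real.sqrt 2 * |(k:ℝ)|) * w1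
          * (2 * |(k:ℝ)| * Real.sqrt w2) := by
        apply mul_le_mul _ hm hm0 (by positivity)
        exact mul_le_mul hstep0 hk1w (sq_nonneg _) (by positivity)
    _ = 2^((r+2)/2) * (w1^((r+1)/2) * w2^(r/2)) * (k:ℝ)^2 := by
        rw [e1, e2, e3, ← _root_.sq_abs (k:ℝ)]; ring

open MeasureTheory in
lemma fourierCoeff_conj_13 {T : ℝ} [hT : Fact (0 < T)] (f : AddCircle T → ℂ) (n : ℤ) :
    fourierCoeff (fun x => (starRingEnd ℂ) (f x)) n = (starRingEnd ℂ) (fourierCoeff f (-n)) := by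
  rw [fourierCoeff, fourierCoeff, ← integral_conj]
  congr 1
  ext x
  simp only [smul_eq_mul, map_mul, fourier_neg, neg_neg, RingHomCompTriple.comp_apply,
    RingHom.id_apply]

lemma young_sq_13 (b g : ℤ → ℝ) (hb0 : ∀ j, 0 ≤ b j) (hg0 : ∀ j, 0 ≤ g j)
    (hb2 : Summable (fun j => b j ^ 2)) (hg1 : Summable g) :
    Summable (fun k => (∑' k₁, b k₁ * g (k - k₁)) ^ 2) ∧
    ∑' k, (∑' k₁, b k₁ * g (k - k₁)) ^ 2 ≤ (∑' j, g j)^2 * ∑' j, b j ^ 2 := by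
  have hG0 : 0 ≤ ∑' j, g j := tsum_nonneg hg0
  have hgle : ∀ j, g j ≤ ∑' j, g j := fun j => Summable.le_tsum hg1 j (fun i _ => hg0 i)
  have hgs : ∀ k : ℤ, Summable (fun k₁ => g (k - k₁)) :=
    fun k => ((Equiv.subLeft k).summable_iff).mpr hg1
  have hgs_tsum : ∀ k : ℤ, ∑' k₁, g (k - k₁) = ∑' j, g j :=
    fun k => (Equiv.subLeft k).tsum_eq g
  have hrow : ∀ k₁ : ℤ, Summable (fun k : ℤ => b k₁ ^ 2 * g (k - k₁)) :=
    fun k₁ => (((Equiv.subRight k₁).summable_iff).mpr hg1).mul_left _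
  have hrowsum : ∀ k₁ : ℤ, ∑' k : ℤ, b k₁ ^ 2 * g (k - k₁) = b k₁ ^ 2 * ∑' j, g j := by
    intro k₁
    rw [tsum_mul_left]
    congr 1
    exact (Equiv.subRight k₁).tsum_eq g
  have hQ : Summable (fun p : ℤ × ℤ => b p.1 ^ 2 * g (p.2 - p.1)) := by
    rw [summable_prod_of_nonneg (fun p => mul_nonneg (sq_nonneg _) (hg0 _))]
    refine ⟨fun k₁ => hrow k₁, ?_⟩
    apply Summable.of_nonneg_of_le (fun k₁ => tsum_nonneg fun k => mul_nonneg (sq_nonneg _) (hg0 _))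
      (fun k₁ => le_of_eq (hrowsum k₁)) (hb2.mul_right _)
  have hH : Summable (fun k : ℤ => ∑' k₁, b k₁ ^ 2 * g (k - k₁)) := hQ.prod_symm.prod
  have hHsum : ∑' k : ℤ, ∑' k₁, b k₁ ^ 2 * g (k - k₁) = (∑' j, g j) * ∑' j, b j ^ 2 := by
    rw [Summable.tsum_comm (f := fun k₁ k => b k₁ ^ 2 * g (k - k₁)) hQ]
    calc ∑' k₁, ∑' k : ℤ, b k₁ ^ 2 * g (k - k₁) = ∑' k₁, b k₁ ^ 2 * ∑' j, g j :=
          tsum_congr hrowsum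
      _ = (∑' j, g j) * ∑' j, b j ^ 2 := by rw [tsum_mul_right]; ring
  have hFH : ∀ k : ℤ, (∑' k₁, b k₁ * g (k - k₁)) ^ 2
      ≤ (∑' k₁, b k₁ ^ 2 * g (k - k₁)) * ∑' j, g j := by
    intro k
    have huv : (fun k₁ => b k₁ * g (k - k₁))
        = fun k₁ => (b k₁ * Real.sqrt (g (k - k₁))) * Real.sqrt (g (k - k₁)) := by
      funext k₁; rw [mul_assoc, Real.mul_self_sqrt (hg0 _)]
    have hu2 : ∀ k₁, (b k₁ * Real.sqrt (g (k - k₁))) ^ 2 = b k₁ ^ 2 * g (k - k₁) := by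
      intro k₁; rw [mul_pow, Real.sq_sqrt (hg0 _)]
    have hu2s : Summable (fun k₁ => (b k₁ * Real.sqrt (g (k - k₁))) ^ 2) := by
      refine Summable.of_nonneg_of_le (fun i => sq_nonneg _) (fun i => ?_)
        (hb2.mul_right (∑' j, g j))
      rw [hu2 i]; exact mul_le_mul_of_nonneg_left (hgle _) (sq_nonneg _)
    have hv2s : Summable (fun k₁ => (Real.sqrt (g (k - k₁))) ^ 2) := by
      refine (hgs k).congr fun k₁ => ?_
      rw [Real.sq_sqrt (hg0 _)]
    obtain ⟨hsum, hle⟩ := tsum_cs (fun k₁ => b k₁ * Real.sqrt (g (k - k₁)))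
      (fun k₁ => Real.sqrt (g (k - k₁)))
      (fun i => mul_nonneg (hb0 _) (Real.sqrt_nonneg _))
      (fun i => Real.sqrt_nonneg _) hu2s hv2s
    rw [huv]
    have hnn : 0 ≤ ∑' k₁, (b k₁ * Real.sqrt (g (k - k₁))) * Real.sqrt (g (k - k₁)) :=
      tsum_nonneg fun i =>
        mul_nonneg (mul_nonneg (hb0 _) (Real.sqrt_nonneg _)) (Real.sqrt_nonneg _)
    calc (∑' k₁, (b k₁ * Real.sqrt (g (k - k₁))) * Real.sqrt (g (k - k₁))) ^ 2
        ≤ (Real.sqrt (∑' k₁, (b k₁ * Real.sqrt (g (k - k₁))) ^ 2) *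
            Real.sqrt (∑' k₁, (Real.sqrt (g (k - k₁))) ^ 2)) ^ 2 := by
          apply pow_le_pow_left₀ hnn hle
      _ = (∑' k₁, (b k₁ * Real.sqrt (g (k - k₁))) ^ 2) *
            ∑' k₁, (Real.sqrt (g (k - k₁))) ^ 2 := by
          rw [mul_pow, Real.sq_sqrt (tsum_nonneg fun i => sq_nonneg _),
            Real.sq_sqrt (tsum_nonneg fun i => sq_nonneg _)]
      _ = (∑' k₁, b k₁ ^ 2 * g (k - k₁)) * ∑' j, g j := by
          congr 1
          · exact tsum_congr hu2
          · rw [← hgs_tsum k]; exact tsum_congr fun k₁ => Real.sq_sqrt (hg0 _)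
  have hF2 : Summable (fun k => (∑' k₁, b k₁ * g (k - k₁)) ^ 2) :=
    Summable.of_nonneg_of_le (fun k => sq_nonneg _) hFH (hH.mul_right _)
  refine ⟨hF2, ?_⟩
  calc ∑' k, (∑' k₁, b k₁ * g (k - k₁)) ^ 2
      ≤ ∑' k, (∑' k₁, b k₁ ^ 2 * g (k - k₁)) * ∑' j, g j :=
        Summable.tsum_le_tsum hFH hF2 (hH.mul_right _)
    _ = (∑' j, g j)^2 * ∑' j, b j ^ 2 := by
        rw [tsum_mul_right, hHsum]; ring

lemma summable_inv_one_add_sq_13 : Summable (fun j : ℤ => ((1:ℝ) + (j:ℝ)^2)⁻¹) := by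
  have hnat : Summable (fun n : ℕ => ((1:ℝ) + (n:ℝ)^2)⁻¹) := by
    have h1 : Summable (fun n : ℕ => (1:ℝ) / (n:ℝ)^2) :=
      Real.summable_one_div_nat_pow.mpr one_lt_two
    have h2 : Summable (fun n : ℕ => (1:ℝ) / ((n:ℝ)+1)^2) := by
      have h3 := h1.comp_injective (add_left_injective 1)
      refine h3.congr fun n => ?_
      simp only [Function.comp]
      push_cast
      ring
    refine Summable.of_nonneg_of_le (fun n => by positivity) (fun n => ?_) (h2.mul_left 2)
    have hp1 : (0:ℝ) < 1 + (n:ℝ)^2 := by positivity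
    have hp2 : (0:ℝ) < ((n:ℝ)+1)^2 := by positivity
    rw [mul_div_assoc' 2 1, inv_eq_one_div, div_le_div_iff₀ hp1 hp2]
    nlinarith [sq_nonneg ((n:ℝ) - 1)]
  have hshift : Summable (fun n : ℕ => ((1:ℝ) + ((n:ℝ)+1)^2)⁻¹) := by
    have h4 := hnat.comp_injective (add_left_injective 1)
    refine h4.congr fun n => ?_
    simp only [Function.comp]
    push_cast
    ring_nf
  refine Summable.of_nat_of_neg_add_one (hnat.congr fun n => rfl) ?_
  refine hshift.congr fun n => ?_
  push_cast
  ring_nf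

end Stmt13Aux

theorem stmt13 (r : ℝ) (hr : 1 ≤ r) :
    ∃ C > (0:ℝ), ∀ τ : ℝ, 0 < τ → ∀ f : 𝕋 → ℂ, MemH (r + 1) f →
      seqNorm r (P1coef τ f) ≤ C * τ^2 * (sNorm (r + 1) f)^2 := by
  set K : ℝ := ∑' j : ℤ, ((1:ℝ) + (j:ℝ)^2)⁻¹ with hKd
  have hKs := summable_inv_one_add_sq_13
  have hK1 : (1:ℝ) ≤ K := by
    have h0 := Summable.le_tsum hKs 0 (fun i _ => by positivity)
    simpa using h0
  have hK0 : (0:ℝ) < K := lt_of_lt_of_le one_pos hK1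
  set C₁ : ℝ := (2:ℝ)^((r+2)/2) with hC₁d
  have hC₁0 : 0 < C₁ := Real.rpow_pos_of_pos two_pos _
  refine ⟨4 * C₁ * Real.sqrt K, by positivity, ?_⟩
  intro τ hτ f hf
  have hwpos : ∀ j : ℤ, (0:ℝ) < 1 + (j:ℝ)^2 := fun j => by positivity
  have hwone : ∀ j : ℤ, (1:ℝ) ≤ 1 + (j:ℝ)^2 := fun j => by nlinarith [sq_nonneg (j:ℝ)]
  -- the basic sequences
  set na : ℤ → ℝ := fun j => ‖fc (cconj f) j‖ with hnad
  have hna : ∀ j, na j = ‖fc f (-j)‖ := by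
    intro j
    have h1 : fc (cconj f) j = (starRingEnd ℂ) (fourierCoeff f (-j)) :=
      fourierCoeff_conj_13 f j
    rw [hnad]
    simp only [h1, RCLike.norm_conj]
    rfl
  set b : ℤ → ℝ := fun j => ((1:ℝ) + (j:ℝ)^2)^((r+1)/2) * na j with hbd
  set g : ℤ → ℝ := fun j => ((1:ℝ) + (j:ℝ)^2)^(r/2) * na j with hgd
  have hb0 : ∀ j, 0 ≤ b j :=
    fun j => mul_nonneg (Real.rpow_nonneg (hwpos j).le _) (norm_nonneg _)
  have hg0 : ∀ j, 0 ≤ g j :=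
    fun j => mul_nonneg (Real.rpow_nonneg (hwpos j).le _) (norm_nonneg _)
  set S : ℝ := sNormSq (r+1) f with hSd
  have hS0 : 0 ≤ S := tsum_nonneg fun k =>
    mul_nonneg (Real.rpow_nonneg (hwpos k).le _) (sq_nonneg _)
  have hfs : Summable (fun k : ℤ => (1 + (k:ℝ)^2)^(r+1) * ‖fc f k‖^2) := hf.2
  -- b² is summable with sum S
  have hbsq_eq : ∀ j, b j ^ 2 = (1 + ((-j : ℤ):ℝ)^2)^(r+1) * ‖fc f (-j)‖^2 := by
    intro j
    rw [hbd]
    simp only []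
    rw [mul_pow, hna j]
    congr 1
    · rw [sq, ← Real.rpow_add (hwpos j)]
      rw [show (r+1)/2 + (r+1)/2 = r + 1 by ring]
      congr 2
      push_cast; ring
  have hb2 : Summable (fun j => b j ^ 2) := by
    have h1 := hfs.comp_injective (f := fun k : ℤ => (1 + (k:ℝ)^2)^(r+1) * ‖fc f k‖^2)
      (i := fun j : ℤ => -j) (fun a b hab => by simpa using hab)
    exact h1.congr fun j => (hbsq_eq j).symm
  have hb2sum : ∑' j, b j ^ 2 = S := by
    rw [tsum_congr hbsq_eq, hSd, sNormSq]
    exact (Equiv.neg ℤ).tsum_eq (fun k : ℤ => (1 + (k:ℝ)^2)^(r+1) * ‖fc f k‖^2)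
  -- g ≤ b pointwise
  have hgb : ∀ j, g j ≤ b j := by
    intro j
    exact mul_le_mul_of_nonneg_right
      (Real.rpow_le_rpow_of_exponent_le (hwone j) (by linarith)) (norm_nonneg _)
  have hg2 : Summable (fun j => g j ^ 2) :=
    Summable.of_nonneg_of_le (fun j => sq_nonneg _)
      (fun j => pow_le_pow_left₀ (hg0 j) (hgb j) 2) hb2
  -- g is summable, with sum at most √K √S
  have hu2s : Summable (fun j : ℤ => ((Real.sqrt (1 + (j:ℝ)^2))⁻¹) ^ 2) := by
    refine hKs.congr fun j => ?_
    rw [inv_pow, Real.sq_sqrt (hwpos j).le]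
  have hub : ∀ j : ℤ, (Real.sqrt (1 + (j:ℝ)^2))⁻¹ * b j = g j := by
    intro j
    rw [hbd, hgd]
    simp only []
    rw [Real.sqrt_eq_rpow, ← Real.rpow_neg (hwpos j).le, ← mul_assoc,
      ← Real.rpow_add (hwpos j)]
    congr 2
    ring
  obtain ⟨hg1', hGle'⟩ := tsum_cs (fun j : ℤ => (Real.sqrt (1 + (j:ℝ)^2))⁻¹) b
    (fun j => by positivity) hb0 hu2s hb2
  have hg1 : Summable g := hg1'.congr hub
  have hGle : ∑' j, g j ≤ Real.sqrt K * Real.sqrt S := by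
    have e1 : ∑' j : ℤ, ((Real.sqrt (1 + (j:ℝ)^2))⁻¹)^2 = K := by
      rw [hKd]
      exact tsum_congr fun j => by rw [inv_pow, Real.sq_sqrt (hwpos j).le]
    rw [← tsum_congr hub]
    refine hGle'.trans (le_of_eq ?_)
    rw [e1, hb2sum]
  have hG0 : 0 ≤ ∑' j, g j := tsum_nonneg hg0
  -- summability of convolution terms
  have hbg : ∀ k : ℤ, Summable (fun k₁ => b k₁ * g (k - k₁)) := by
    intro k
    have hgshift : Summable (fun k₁ : ℤ => g (k - k₁) ^ 2) :=
      hg2.comp_injective (f := fun j : ℤ => g j ^ 2) (i := fun k₁ : ℤ => k - k₁)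
        (fun a b hab => by simpa using hab)
    exact (tsum_cs b (fun k₁ => g (k - k₁)) hb0 (fun _ => hg0 _) hb2 hgshift).1
  -- the per-k bound
  have hk : ∀ k : ℤ, (1 + (k:ℝ)^2)^(r/2) * ‖P1coef τ f k‖
      ≤ 4 * C₁ * τ^2 * ∑' k₁, b k₁ * g (k - k₁) := by
    intro k
    have hFnn : 0 ≤ ∑' k₁, b k₁ * g (k - k₁) :=
      tsum_nonneg fun k₁ => mul_nonneg (hb0 _) (hg0 _)
    by_cases hk0 : k = 0
    · rw [P1coef, if_pos hk0, norm_zero, mul_zero]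
      exact mul_nonneg (by positivity) hFnn
    · rw [P1coef, if_neg hk0]
      set t : ℤ → ℂ := fun k₁ : ℤ => ((k₁ : ℂ) ^ 2 / (k : ℂ) ^ 2) *
        (∫ s in (0 : ℝ)..τ,
          (Complex.exp (-(2 * Complex.I * s * (((k - k₁ : ℤ)) : ℂ) ^ 2)) - 1) *
          (Complex.exp (-(2 * Complex.I * s * (k : ℂ) * (k₁ : ℂ))) - 1)) *
        fc (cconj f) k₁ * fc (cconj f) (k - k₁) with htd
    -- termwise bound
      have hterm : ∀ k₁ : ℤ, (1 + (k:ℝ)^2)^(r/2) * ‖t k₁‖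
          ≤ 4 * C₁ * τ^2 * (b k₁ * g (k - k₁)) := by
        intro k₁
        have hq : ‖(k₁ : ℂ) ^ 2 / (k : ℂ) ^ 2‖ = (k₁:ℝ)^2 / (k:ℝ)^2 := by
          rw [norm_div, norm_pow, norm_pow, Complex.norm_intCast, Complex.norm_intCast,
            _root_.sq_abs, _root_.sq_abs]
        have hIb := integral_bound_13 τ hτ k k₁
        have hsb := symbol_bound_13 r hr k k₁ hk0
        calc (1 + (k:ℝ)^2)^(r/2) * ‖t k₁‖
            = ((k₁:ℝ)^2/(k:ℝ)^2 * ‖∫ s in (0 : ℝ)..τ,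
                (Complex.exp (-(2 * Complex.I * s * (((k - k₁ : ℤ)) : ℂ) ^ 2)) - 1) *
                (Complex.exp (-(2 * Complex.I * s * (k : ℂ) * (k₁ : ℂ))) - 1)‖)
                * ((1 + (k:ℝ)^2)^(r/2) * (na k₁ * na (k - k₁))) := by
              rw [htd]
              simp only [hnad]
              rw [norm_mul, norm_mul, norm_mul, hq]
              ring
          _ ≤ ((k₁:ℝ)^2/(k:ℝ)^2 * (4 * τ^2 *
                min (((k - k₁ : ℤ) : ℝ)^2) (|(k:ℝ)| * |(k₁:ℝ)|)))
                * ((1 + (k:ℝ)^2)^(r/2) * (na k₁ * na (k - k₁))) := by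
              refine mul_le_mul_of_nonneg_right
                (mul_le_mul_of_nonneg_left hIb (by positivity)) ?_
              have := norm_nonneg (fc (cconj f) k₁)
              have := norm_nonneg (fc (cconj f) (k - k₁))
              positivity
          _ = ((1 + (k:ℝ)^2)^(r/2) * ((k₁:ℝ)^2/(k:ℝ)^2)
                * min (((k - k₁ : ℤ) : ℝ)^2) (|(k:ℝ)| * |(k₁:ℝ)|)) * (4 * τ^2)
                * (na k₁ * na (k - k₁)) := by ring
          _ ≤ (2^((r+2)/2) * ((1 + (k₁:ℝ)^2)^((r+1)/2)
                * (1 + ((k - k₁ : ℤ):ℝ)^2)^(r/2))) * (4 * τ^2)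
                * (na k₁ * na (k - k₁)) := by
              refine mul_le_mul_of_nonneg_right
                (mul_le_mul_of_nonneg_right hsb (by positivity)) ?_
              have := norm_nonneg (fc (cconj f) k₁)
              have := norm_nonneg (fc (cconj f) (k - k₁))
              positivity
          _ = 4 * C₁ * τ^2 * (b k₁ * g (k - k₁)) := by
              rw [hC₁d, hbd, hgd]
              simp only [hnad]
              push_cast
              ring
      by_cases hsumt : Summable t
      · have hnorms : Summable (fun k₁ => ‖t k₁‖) := summable_norm_iff.mpr hsumt
        calc (1 + (k:ℝ)^2)^(r/2) * ‖∑' k₁, t k₁‖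
            ≤ (1 + (k:ℝ)^2)^(r/2) * ∑' k₁, ‖t k₁‖ :=
              mul_le_mul_of_nonneg_left (norm_tsum_le_tsum_norm hnorms) (by positivity)
          _ = ∑' k₁, (1 + (k:ℝ)^2)^(r/2) * ‖t k₁‖ := tsum_mul_left.symm
          _ ≤ ∑' k₁, 4 * C₁ * τ^2 * (b k₁ * g (k - k₁)) :=
              Summable.tsum_le_tsum hterm (hnorms.mul_left _) ((hbg k).mul_left _)
          _ = 4 * C₁ * τ^2 * ∑' k₁, b k₁ * g (k - k₁) := tsum_mul_left
      · rw [tsum_eq_zero_of_not_summable hsumt, norm_zero, mul_zero]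
        exact mul_nonneg (by positivity) hFnn
  -- squaring and summing
  obtain ⟨hFsq, hFle⟩ := young_sq_13 b g hb0 hg0 hb2 hg1
  have hWsq : ∀ k : ℤ, ((1 + (k:ℝ)^2)^(r/2)) ^ 2 = (1 + (k:ℝ)^2)^r := by
    intro k
    rw [sq, ← Real.rpow_add (hwpos k)]
    congr 1; ring
  have hterm2 : ∀ k : ℤ, (1 + (k:ℝ)^2)^r * ‖P1coef τ f k‖^2
      ≤ (4 * C₁ * τ^2)^2 * (∑' k₁, b k₁ * g (k - k₁)) ^ 2 := by
    intro k
    have h1 : ((1 + (k:ℝ)^2)^(r/2) * ‖P1coef τ f k‖) ^ 2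
        ≤ (4 * C₁ * τ^2 * ∑' k₁, b k₁ * g (k - k₁)) ^ 2 :=
      pow_le_pow_left₀ (mul_nonneg (Real.rpow_nonneg (hwpos k).le _) (norm_nonneg _)) (hk k) 2
    calc (1 + (k:ℝ)^2)^r * ‖P1coef τ f k‖^2
        = ((1 + (k:ℝ)^2)^(r/2) * ‖P1coef τ f k‖) ^ 2 := by
          rw [mul_pow, hWsq k]
      _ ≤ (4 * C₁ * τ^2 * ∑' k₁, b k₁ * g (k - k₁)) ^ 2 := h1
      _ = (4 * C₁ * τ^2)^2 * (∑' k₁, b k₁ * g (k - k₁)) ^ 2 := by ring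
  have hseq : seqNormSq r (P1coef τ f) ≤ (4 * C₁ * τ^2)^2 * (K * S^2) := by
    rw [seqNormSq]
    calc ∑' k : ℤ, (1 + (k:ℝ)^2)^r * ‖P1coef τ f k‖^2
        ≤ ∑' k : ℤ, (4 * C₁ * τ^2)^2 * (∑' k₁, b k₁ * g (k - k₁)) ^ 2 := by
          refine Summable.tsum_le_tsum hterm2 ?_ (hFsq.mul_left _)
          exact Summable.of_nonneg_of_le
            (fun k => mul_nonneg (Real.rpow_nonneg (hwpos k).le _) (sq_nonneg _))
            hterm2 (hFsq.mul_left _)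
      _ = (4 * C₁ * τ^2)^2 * ∑' k : ℤ, (∑' k₁, b k₁ * g (k - k₁)) ^ 2 := tsum_mul_left
      _ ≤ (4 * C₁ * τ^2)^2 * ((∑' j, g j)^2 * ∑' j, b j ^ 2) := by
          exact mul_le_mul_of_nonneg_left hFle (by positivity)
      _ ≤ (4 * C₁ * τ^2)^2 * (K * S^2) := by
          refine mul_le_mul_of_nonneg_left ?_ (by positivity)
          rw [hb2sum]
          have h2 : (∑' j, g j)^2 ≤ K * S := by
            calc (∑' j, g j)^2 ≤ (Real.sqrt K * Real.sqrt S)^2 :=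
                  pow_le_pow_left₀ hG0 hGle 2
              _ = K * S := by
                  rw [mul_pow, Real.sq_sqrt hK0.le, Real.sq_sqrt hS0]
          calc (∑' j, g j)^2 * S ≤ (K * S) * S :=
                mul_le_mul_of_nonneg_right h2 hS0
            _ = K * S^2 := by ring
  -- conclude
  have hrhs : (4 * C₁ * τ^2)^2 * (K * S^2) = (4 * C₁ * Real.sqrt K * τ^2 * S)^2 := by
    rw [show (4 * C₁ * Real.sqrt K * τ^2 * S)^2
        = (4 * C₁ * τ^2)^2 * ((Real.sqrt K)^2 * S^2) by ring, Real.sq_sqrt hK0.le]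
  rw [seqNorm]
  calc Real.sqrt (seqNormSq r (P1coef τ f))
      ≤ Real.sqrt ((4 * C₁ * Real.sqrt K * τ^2 * S)^2) := by
        refine Real.sqrt_le_sqrt ?_
        rw [← hrhs]; exact hseq
    _ = 4 * C₁ * Real.sqrt K * τ^2 * S := Real.sqrt_sq (by positivity)
    _ = 4 * C₁ * Real.sqrt K * τ^2 * (sNorm (r+1) f)^2 := by
        have hsq : (sNorm (r+1) f)^2 = S := by
          rw [sNorm, ← hSd, Real.sq_sqrt hS0]
        rw [hsq]
end
end

section
/- Let β ∈ [1/3, 1/2] and r > 3/2 − β. There exists C = C(r, β) > 0 such that for all τ > 0 and all f ∈ H^{r+2β}(𝕋): ‖P₁^τ(f)‖_r ≤ C τ² ‖f‖_{r+2β}². -/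
open MeasureTheory Complex

noncomputable section

local notation "𝕋" => AddCircle (2 * Real.pi)

/-- `‖e^{it} - 1‖ ≤ 2`. -/
lemma myP1_exp_sub_one_le_two (t : ℝ) : ‖Complex.exp ((t:ℂ) * Complex.I) - 1‖ ≤ 2 := by
  have h1 : ‖Complex.exp ((t:ℂ) * Complex.I)‖ = 1 := by
    rw [Complex.norm_exp]
    simp
  calc ‖Complex.exp ((t:ℂ) * Complex.I) - 1‖ ≤ ‖Complex.exp ((t:ℂ) * Complex.I)‖ + ‖(1:ℂ)‖ :=
        norm_sub_le _ _
    _ = 2 := by rw [h1]; norm_num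

/-- `‖e^{it} - 1‖ ≤ 2|t|`. -/
lemma myP1_exp_sub_one_le (t : ℝ) : ‖Complex.exp ((t:ℂ) * Complex.I) - 1‖ ≤ 2 * |t| := by
  rcases le_total |t| 1 with h | h
  · have habs : ‖(t:ℂ) * Complex.I‖ = |t| := by
      simp
    have := Complex.norm_exp_sub_one_le (x := (t:ℂ) * Complex.I) (by rw [habs]; exact h)
    rw [habs] at this
    exact this
  · calc ‖Complex.exp ((t:ℂ) * Complex.I) - 1‖ ≤ 2 := myP1_exp_sub_one_le_two t
      _ ≤ 2 * |t| := by linarith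

/-- Key interval-integral bound. -/
lemma myP1_integral_bound (τ p q : ℝ) (hτ : 0 ≤ τ) :
    ‖∫ s in (0:ℝ)..τ, (Complex.exp ((↑(p*s)) * Complex.I) - 1) *
        (Complex.exp ((↑(q*s)) * Complex.I) - 1)‖ ≤ 2 * min |p| |q| * τ^2 := by
  have hbound : ∀ s ∈ Set.Ioc (0:ℝ) τ,
      ‖(Complex.exp ((↑(p*s)) * Complex.I) - 1) * (Complex.exp ((↑(q*s)) * Complex.I) - 1)‖
        ≤ (4 * min |p| |q|) * s := by
    intro s hs
    have hs0 : 0 ≤ s := hs.1.le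
    rw [norm_mul]
    rcases le_total |p| |q| with h | h
    · have h1 : ‖Complex.exp ((↑(p*s)) * Complex.I) - 1‖ ≤ 2 * (|p| * s) := by
        have := myP1_exp_sub_one_le (p*s)
        rwa [abs_mul, _root_.abs_of_nonneg hs0] at this
      have h2 : ‖Complex.exp ((↑(q*s)) * Complex.I) - 1‖ ≤ 2 := myP1_exp_sub_one_le_two _
      calc ‖Complex.exp ((↑(p*s)) * Complex.I) - 1‖ * ‖Complex.exp ((↑(q*s)) * Complex.I) - 1‖
          ≤ (2 * (|p| * s)) * 2 := by
            apply mul_le_mul h1 h2 (norm_nonneg _) (by positivity)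
        _ = (4 * min |p| |q|) * s := by rw [min_eq_left h]; ring
    · have h1 : ‖Complex.exp ((↑(q*s)) * Complex.I) - 1‖ ≤ 2 * (|q| * s) := by
        have := myP1_exp_sub_one_le (q*s)
        rwa [abs_mul, _root_.abs_of_nonneg hs0] at this
      have h2 : ‖Complex.exp ((↑(p*s)) * Complex.I) - 1‖ ≤ 2 := myP1_exp_sub_one_le_two _
      calc ‖Complex.exp ((↑(p*s)) * Complex.I) - 1‖ * ‖Complex.exp ((↑(q*s)) * Complex.I) - 1‖
          ≤ 2 * (2 * (|q| * s)) := by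
            apply mul_le_mul h2 h1 (norm_nonneg _) (by norm_num)
        _ = (4 * min |p| |q|) * s := by rw [min_eq_right h]; ring
  have hInt : IntervalIntegrable (fun s : ℝ => (4 * min |p| |q|) * s) volume 0 τ :=
    (continuous_const.mul continuous_id).intervalIntegrable _ _
  have hle := intervalIntegral.norm_integral_le_abs_of_norm_le (μ := volume)
      (f := fun s : ℝ => (Complex.exp ((↑(p*s)) * Complex.I) - 1) *
        (Complex.exp ((↑(q*s)) * Complex.I) - 1))
      ?_ hInt
  · refine hle.trans ?_
    rw [intervalIntegral.integral_const_mul, integral_id]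
    rw [show (τ^2 - 0^2)/2 = τ^2/2 by ring]
    rw [show 4 * min |p| |q| * (τ^2/2) = 2 * min |p| |q| * τ^2 by ring]
    rw [_root_.abs_of_nonneg (by positivity)]
  · rw [Set.uIoc_of_le hτ]
    exact (ae_restrict_iff' measurableSet_Ioc).mpr (Filter.Eventually.of_forall hbound)

/-- Triangle inequality for Japanese brackets. -/
lemma myP1_sqrt_triangle (a b : ℝ) :
    Real.sqrt (1 + (a+b)^2) ≤ Real.sqrt (1 + a^2) + Real.sqrt (1 + b^2) := by
  set s := Real.sqrt (1 + a^2) with hs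
  set t := Real.sqrt (1 + b^2) with ht
  have hs2 : s^2 = 1 + a^2 := Real.sq_sqrt (by positivity)
  have ht2 : t^2 = 1 + b^2 := Real.sq_sqrt (by positivity)
  have hsa : |a| ≤ s := by
    rw [hs]
    calc |a| = Real.sqrt (a^2) := (Real.sqrt_sq_eq_abs a).symm
      _ ≤ Real.sqrt (1 + a^2) := Real.sqrt_le_sqrt (by linarith)
  have htb : |b| ≤ t := by
    rw [ht]
    calc |b| = Real.sqrt (b^2) := (Real.sqrt_sq_eq_abs b).symm
      _ ≤ Real.sqrt (1 + b^2) := Real.sqrt_le_sqrt (by linarith)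
  have hs0 : 0 ≤ s := Real.sqrt_nonneg _
  have ht0 : 0 ≤ t := Real.sqrt_nonneg _
  have key : 1 + (a+b)^2 ≤ (s + t)^2 := by
    have hab : a * b ≤ |a| * |b| := le_trans (le_abs_self _) (by rw [abs_mul])
    nlinarith [mul_le_mul hsa htb (abs_nonneg b) hs0]
  calc Real.sqrt (1 + (a+b)^2) ≤ Real.sqrt ((s+t)^2) := Real.sqrt_le_sqrt key
    _ = s + t := Real.sqrt_sq (by linarith)

/-- Summability of `(1+k²)^{-γ}` over `ℤ` for `γ > 1/2`. -/
lemma myP1_summable (γ : ℝ) (hγ : 1/2 < γ) :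
    Summable (fun k : ℤ => (1 + (k:ℝ)^2) ^ (-γ)) := by
  have hmaj : Summable (fun k : ℤ => |(k:ℝ)| ^ (-(2*γ)) + if k = 0 then (1:ℝ) else 0) :=
    (Real.summable_abs_int_rpow (by linarith)).add (hasSum_ite_eq (0:ℤ) (1:ℝ)).summable
  apply Summable.of_nonneg_of_le (fun k => by positivity) ?_ hmaj
  intro k
  by_cases hk : k = 0
  · subst hk
    simp only [Int.cast_zero, ne_eq, abs_zero, if_true]
    rw [Real.zero_rpow (by intro h; rw [neg_eq_zero] at h; linarith), zero_add]
    have : ((1:ℝ) + 0^2) = 1 := by norm_num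
    rw [this, Real.one_rpow]
  · have hk1 : (1:ℝ) ≤ |(k:ℝ)| := by
      have : (1:ℤ) ≤ |k| := Int.one_le_abs (by exact_mod_cast hk)
      calc (1:ℝ) ≤ |(k:ℤ)| := by exact_mod_cast this
        _ = |(k:ℝ)| := by push_cast; rfl
    have h1 : (1 + (k:ℝ)^2) ^ (-γ) ≤ (|(k:ℝ)|^2) ^ (-γ) := by
      apply Real.rpow_le_rpow_of_nonpos (by positivity) ?_ (by linarith)
      rw [_root_.sq_abs]; linarith [sq_nonneg (k:ℝ)]
    rw [if_neg hk]
    refine h1.trans ?_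
    rw [← Real.rpow_natCast |(k:ℝ)| 2, ← Real.rpow_mul (abs_nonneg _)]
    rw [show ((2:ℕ):ℝ) * (-γ) = -(2*γ) by push_cast; ring]
    linarith [le_refl (|(k:ℝ)| ^ (-(2*γ)))]


private lemma myP1_rpmul {x : ℝ} (hx : 0 < x) {a b : ℝ} (c : ℝ) (h : a + b = c) :
    x ^ a * x ^ b = x ^ c := by rw [← Real.rpow_add hx, h]

private lemma myP1_rexp_le {x : ℝ} (hx : 1 ≤ x) {a b : ℝ} (h : a ≤ b) :
    x ^ a ≤ x ^ b := Real.rpow_le_rpow_of_exponent_le hx h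

private lemma myP1_mulstep {A B C : ℝ} (h : B ≤ C) (hA : 0 ≤ A) : A * B ≤ A * C :=
  mul_le_mul_of_nonneg_left h hA

lemma myP1_coreIII (β r σ γ : ℝ) (hβ1 : 1/3 ≤ β) (hβ2 : β ≤ 1/2) (hr : 3/2 - β < r)
    (hσ : σ = r + 2*β) (hγ1 : γ ≤ 2*β) (hγ2 : γ ≤ r + 4*β - 2)
    (x y z : ℝ) (hx : 1 ≤ x) (hy : 1 ≤ y) (hz : 1 ≤ z)
    (hy2x : y ≤ 2*x) (hz2x : z ≤ 2*x) (hx2y : x ≤ 2*y) :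
    x ^ (r-2) * y ^ (2-σ) * z ^ (2-σ) ≤ 2 ^ σ * x ^ (-γ) := by
  have hx0 : (0:ℝ) < x := by linarith
  have hy0 : (0:ℝ) < y := by linarith
  have hz0 : (0:ℝ) < z := by linarith
  have h20 : (0:ℝ) < 2 := two_pos
  rcases le_total σ 2 with hσ2 | h2σ
  · have h1 : y ^ (2-σ) ≤ (2*x) ^ (2-σ) := Real.rpow_le_rpow hy0.le hy2x (by linarith)
    have h1' : z ^ (2-σ) ≤ (2*x) ^ (2-σ) := Real.rpow_le_rpow hz0.le hz2x (by linarith)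
    have step : x ^ (r-2) * y ^ (2-σ) * z ^ (2-σ) ≤ x ^ (r-2) * (2*x) ^ (2-σ) * (2*x) ^ (2-σ) := by
      have hxr : (0:ℝ) ≤ x ^ (r-2) := (Real.rpow_pos_of_pos hx0 _).le
      apply mul_le_mul (mul_le_mul le_rfl h1 (Real.rpow_nonneg hy0.le _) hxr) h1'
        (Real.rpow_nonneg hz0.le _) (by positivity)
    refine step.trans ?_
    rw [Real.mul_rpow h20.le hx0.le]
    have e1 : x ^ (r-2) * ((2:ℝ)^(2-σ) * x^(2-σ)) * ((2:ℝ)^(2-σ) * x^(2-σ))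
        = ((2:ℝ)^(2-σ) * 2^(2-σ)) * (x^(r-2) * x^(2-σ) * x^(2-σ)) := by ring
    rw [e1, myP1_rpmul h20 (4-2*σ) (by ring),
      myP1_rpmul hx0 (r-σ) (by ring), myP1_rpmul hx0 (r+2-2*σ) (by ring)]
    apply mul_le_mul (myP1_rexp_le one_le_two (by linarith))
      (myP1_rexp_le hx (by linarith)) (Real.rpow_nonneg hx0.le _)
      (Real.rpow_nonneg h20.le _)
  · have h1 : y ^ (2-σ) ≤ (x/2) ^ (2-σ) :=
      Real.rpow_le_rpow_of_nonpos (by linarith) (by linarith) (by linarith)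
    have h2 : z ^ (2-σ) ≤ 1 := Real.rpow_le_one_of_one_le_of_nonpos hz (by linarith)
    have step : x ^ (r-2) * y ^ (2-σ) * z ^ (2-σ) ≤ x ^ (r-2) * (x/2) ^ (2-σ) * 1 := by
      have hxr : (0:ℝ) ≤ x ^ (r-2) := (Real.rpow_pos_of_pos hx0 _).le
      apply mul_le_mul (mul_le_mul le_rfl h1 (Real.rpow_nonneg hy0.le _) hxr) h2
        (Real.rpow_nonneg hz0.le _) (by positivity)
    refine step.trans ?_
    have einv : ((2:ℝ)^(2-σ))⁻¹ = (2:ℝ)^(σ-2) := by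
      rw [← Real.rpow_neg h20.le, show -(2-σ) = σ-2 by ring]
    rw [mul_one, Real.div_rpow hx0.le h20.le,
      show x ^ (r-2) * (x ^ (2-σ) / 2 ^ (2-σ)) = ((2:ℝ)^(2-σ))⁻¹ * (x^(r-2) * x^(2-σ)) by ring,
      einv, myP1_rpmul hx0 (r-σ) (by ring)]
    apply mul_le_mul (myP1_rexp_le one_le_two (by linarith))
      (myP1_rexp_le hx (by linarith)) (Real.rpow_nonneg hx0.le _)
      (Real.rpow_nonneg h20.le _)

lemma myP1_core (β r σ γ : ℝ) (hβ1 : 1/3 ≤ β) (hβ2 : β ≤ 1/2) (hr : 3/2 - β < r)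
    (hσ : σ = r + 2*β) (hγ1 : γ ≤ 2*β) (hγ2 : γ ≤ r + 4*β - 2)
    (x y z : ℝ) (hx : 1 ≤ x) (hy : 1 ≤ y) (hz : 1 ≤ z)
    (htx : x ≤ y + z) (hty : y ≤ x + z) :
    x ^ (r-2) * y ^ (2-σ) * z ^ (-σ) * min (z^2) (x*y) ≤ 2 ^ σ * x ^ (-γ) := by
  have hx0 : (0:ℝ) < x := by linarith
  have hy0 : (0:ℝ) < y := by linarith
  have hz0 : (0:ℝ) < z := by linarith
  have h20 : (0:ℝ) < 2 := two_pos
  have hσ32 : 3/2 ≤ σ := by linarith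
  have hzz : z ^ (-σ) * z ^ 2 = z ^ (2-σ) := by
    rw [← Real.rpow_natCast z 2, myP1_rpmul hz0 (2-σ) (by push_cast; ring)]
  have hxx : x ^ (r-1) = x ^ (r-2) * x := by
    rw [show r-1 = (r-2)+1 by ring, Real.rpow_add_one hx0.ne']
  have hyy : y ^ (3-σ) = y ^ (2-σ) * y := by
    rw [show 3-σ = (2-σ)+1 by ring, Real.rpow_add_one hy0.ne']
  have hB2 : x ^ (r-2) * y ^ (2-σ) * z ^ (-σ) * min (z^2) (x*y)
      ≤ x ^ (r-1) * y ^ (3-σ) * z ^ (-σ) := by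
    calc x ^ (r-2) * y ^ (2-σ) * z ^ (-σ) * min (z^2) (x*y)
        ≤ x ^ (r-2) * y ^ (2-σ) * z ^ (-σ) * (x*y) :=
          myP1_mulstep (min_le_right _ _) (by positivity)
      _ = x ^ (r-1) * y ^ (3-σ) * z ^ (-σ) := by rw [hxx, hyy]; ring
  have hB1 : x ^ (r-2) * y ^ (2-σ) * z ^ (-σ) * min (z^2) (x*y)
      ≤ x ^ (r-2) * y ^ (2-σ) * z ^ (2-σ) := by
    calc x ^ (r-2) * y ^ (2-σ) * z ^ (-σ) * min (z^2) (x*y)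
        ≤ x ^ (r-2) * y ^ (2-σ) * z ^ (-σ) * z^2 :=
          myP1_mulstep (min_le_left _ _) (by positivity)
      _ = x ^ (r-2) * y ^ (2-σ) * (z ^ (-σ) * z^2) := by ring
      _ = x ^ (r-2) * y ^ (2-σ) * z ^ (2-σ) := by rw [hzz]
  have hone : (1:ℝ) ≤ 2 ^ σ := by
    rw [show (1:ℝ) = (2:ℝ) ^ (0:ℝ) from (Real.rpow_zero 2).symm]
    exact myP1_rexp_le one_le_two (by linarith)
  have honex : ∀ w : ℝ, w ≤ 2^σ * w ∨ 0 ≤ w → (0 ≤ w) → w ≤ 2^σ * w := by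
    intro w _ hw; nlinarith
  rcases le_total x y with hxy | hyx
  · rcases le_total y (2*z) with hy2z | h2zy
    · -- Group I : x ≤ y ≤ 2z
      refine hB2.trans ?_
      have s1 : z ^ (-σ) ≤ (y/2) ^ (-σ) :=
        Real.rpow_le_rpow_of_nonpos (by linarith) (by linarith) (by linarith)
      have e1 : ((y/2):ℝ) ^ (-σ) = 2^σ * y^(-σ) := by
        rw [div_eq_mul_inv, Real.mul_rpow hy0.le (by positivity), Real.inv_rpow h20.le,
          Real.rpow_neg h20.le, inv_inv, mul_comm]
      calc x ^ (r-1) * y ^ (3-σ) * z ^ (-σ) ≤ x ^ (r-1) * y ^ (3-σ) * ((y/2) ^ (-σ)) :=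
            myP1_mulstep s1 (by positivity)
        _ = 2^σ * (x ^ (r-1) * (y ^ (3-σ) * y^(-σ))) := by rw [e1]; ring
        _ = 2^σ * (x ^ (r-1) * y ^ (3-2*σ)) := by rw [myP1_rpmul hy0 (3-2*σ) (by ring)]
        _ ≤ 2^σ * (x ^ (r-1) * x ^ (3-2*σ)) := by
            apply myP1_mulstep ?_ (Real.rpow_nonneg h20.le _)
            exact myP1_mulstep (Real.rpow_le_rpow_of_nonpos hx0 hxy (by linarith))
              (by positivity)
        _ = 2^σ * x ^ (r+2-2*σ) := by rw [myP1_rpmul hx0 (r+2-2*σ) (by ring)]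
        _ ≤ 2^σ * x ^ (-γ) :=
            myP1_mulstep (myP1_rexp_le hx (by linarith)) (Real.rpow_nonneg h20.le _)
    · -- x ≤ y, 2z ≤ y : Group III
      refine hB1.trans (myP1_coreIII β r σ γ hβ1 hβ2 hr hσ hγ1 hγ2 x y z hx hy hz
        (by linarith) (by linarith) (by linarith))
  · rcases le_total x z with hxz | hzx
    · -- Group II : y ≤ x ≤ z
      refine hB2.trans ?_
      have s1 : z ^ (-σ) ≤ x ^ (-σ) :=
        Real.rpow_le_rpow_of_nonpos hx0 hxz (by linarith)
      have step : x ^ (r-1) * y ^ (3-σ) * z ^ (-σ) ≤ x ^ (r-1) * y ^ (3-σ) * x ^ (-σ) :=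
        myP1_mulstep s1 (by positivity)
      refine step.trans ?_
      rcases le_total σ 3 with hσ3 | h3σ
      · have s2 : y ^ (3-σ) ≤ x ^ (3-σ) := Real.rpow_le_rpow hy0.le hyx (by linarith)
        calc x ^ (r-1) * y ^ (3-σ) * x ^ (-σ) ≤ x ^ (r-1) * x ^ (3-σ) * x ^ (-σ) := by
              apply mul_le_mul_of_nonneg_right ?_ (Real.rpow_nonneg hx0.le _)
              exact myP1_mulstep s2 (by positivity)
          _ = x ^ (r+2-2*σ) := by
              rw [myP1_rpmul hx0 (r+2-σ) (by ring), myP1_rpmul hx0 (r+2-2*σ) (by ring)]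
          _ ≤ x ^ (-γ) := myP1_rexp_le hx (by linarith)
          _ ≤ 2^σ * x ^ (-γ) := by nlinarith [Real.rpow_pos_of_pos hx0 (-γ)]
      · have s2 : y ^ (3-σ) ≤ 1 := Real.rpow_le_one_of_one_le_of_nonpos hy (by linarith)
        calc x ^ (r-1) * y ^ (3-σ) * x ^ (-σ) ≤ x ^ (r-1) * 1 * x ^ (-σ) := by
              apply mul_le_mul_of_nonneg_right ?_ (Real.rpow_nonneg hx0.le _)
              exact myP1_mulstep s2 (by positivity)
          _ = x ^ (r-1-σ) := by rw [mul_one, myP1_rpmul hx0 (r-1-σ) (by ring)]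
          _ ≤ x ^ (-γ) := myP1_rexp_le hx (by linarith)
          _ ≤ 2^σ * x ^ (-γ) := by nlinarith [Real.rpow_pos_of_pos hx0 (-γ)]
    · -- y ≤ x, z ≤ x
      rcases le_total y z with hyz | hzy
      · refine hB1.trans ?_
        rw [show x ^ (r-2) * y ^ (2-σ) * z ^ (2-σ) = x ^ (r-2) * z ^ (2-σ) * y ^ (2-σ) by ring]
        exact myP1_coreIII β r σ γ hβ1 hβ2 hr hσ hγ1 hγ2 x z y hx hz hy
          (by linarith) (by linarith) (by linarith)
      · exact hB1.trans (myP1_coreIII β r σ γ hβ1 hβ2 hr hσ hγ1 hγ2 x y z hx hy hz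
          (by linarith) (by linarith) (by linarith))


/-- `X^e = (√X)^(2e)` for `X ≥ 0`. -/
private lemma myP1_rpow_sqrt {X : ℝ} (hX : 0 ≤ X) (e : ℝ) :
    X ^ e = (Real.sqrt X) ^ (2*e) := by
  rw [Real.sqrt_eq_rpow, ← Real.rpow_mul hX]
  congr 1
  ring

set_option maxHeartbeats 1000000 in
lemma myP1_weight_real (β r σ γ : ℝ) (hβ1 : 1/3 ≤ β) (hβ2 : β ≤ 1/2) (hr : 3/2 - β < r)
    (hσ : σ = r + 2*β) (hγ1 : γ ≤ 2*β) (hγ2 : γ ≤ r + 4*β - 2)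
    (a b x y z : ℝ) (hx : 1 ≤ x) (hy : 1 ≤ y) (hz : 1 ≤ z)
    (hx2 : x^2 = 1 + a^2) (hy2 : y^2 = 1 + b^2) (hz2 : z^2 = 1 + (a-b)^2)
    (ha1 : 1 ≤ |a|) (htx : x ≤ y + z) (hty : y ≤ x + z) :
    (b^2/a^2) * min ((a-b)^2) |a*b|
      ≤ 2^(σ+1) * (x^(-γ-r) * (y^(σ:ℝ) * z^(σ:ℝ))) := by
  have hx0 : (0:ℝ) < x := by linarith
  have hy0 : (0:ℝ) < y := by linarith
  have hz0 : (0:ℝ) < z := by linarith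
  have hax : |a| ≤ x := by
    have h1 : |a|^2 ≤ x^2 := by rw [_root_.sq_abs]; nlinarith
    nlinarith [abs_nonneg a]
  have hby : |b| ≤ y := by
    have h1 : |b|^2 ≤ y^2 := by rw [_root_.sq_abs]; nlinarith
    nlinarith [abs_nonneg b]
  have hcore := myP1_core β r σ γ hβ1 hβ2 hr hσ hγ1 hγ2 x y z hx hy hz htx hty
  have ha2 : (1:ℝ) ≤ a^2 := by nlinarith [_root_.sq_abs a]
  have ha0 : (0:ℝ) < a^2 := by linarith
  have hmin : min ((a-b)^2) |a*b| ≤ min (z^2) (x*y) := by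
    have hm1 : (a-b)^2 ≤ z^2 := by nlinarith
    have hm2 : |a*b| ≤ x*y := by
      rw [abs_mul]
      exact mul_le_mul hax hby (abs_nonneg b) (by linarith)
    exact min_le_min hm1 hm2
  have hmin0 : 0 ≤ min ((a-b)^2) |a*b| := le_min (sq_nonneg _) (abs_nonneg _)
  have hfrac : b^2/a^2 ≤ 2 * y^2 / x^2 := by
    rw [div_le_div_iff₀ ha0 (by positivity)]
    nlinarith [sq_nonneg b]
  have step1 : (b^2/a^2) * min ((a-b)^2) |a*b| ≤ (2 * y^2 / x^2) * min (z^2) (x*y) :=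
    mul_le_mul hfrac hmin hmin0 (by positivity)
  refine step1.trans ?_
  have e1 : x ^ (-(r:ℝ)) * x ^ (r-2) = (x^2)⁻¹ := by
    rw [myP1_rpmul hx0 (-2 : ℝ) (by ring), ← Real.rpow_natCast x 2,
      ← Real.rpow_neg hx0.le]
    norm_num
  have e2 : y ^ (σ:ℝ) * y ^ (2-σ) = y^2 := by
    rw [myP1_rpmul hy0 (2 : ℝ) (by ring), ← Real.rpow_natCast y 2]
    norm_num
  have e3 : z ^ (σ:ℝ) * z ^ (-σ) = 1 := by
    rw [myP1_rpmul hz0 (0 : ℝ) (by ring), Real.rpow_zero]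
  have key : (2 * y^2 / x^2) * min (z^2) (x*y)
      = 2 * (x^(-(r:ℝ)) * (y^(σ:ℝ) * z^(σ:ℝ))) *
        (x ^ (r-2) * y ^ (2-σ) * z ^ (-σ) * min (z^2) (x*y)) := by
    rw [show 2 * (x^(-(r:ℝ)) * (y^(σ:ℝ) * z^(σ:ℝ))) *
        (x ^ (r-2) * y ^ (2-σ) * z ^ (-σ) * min (z^2) (x*y))
      = 2 * (x^(-(r:ℝ)) * x^(r-2)) * (y^(σ:ℝ) * y^(2-σ)) * (z^(σ:ℝ) * z^(-σ))
        * min (z^2) (x*y) by ring, e1, e2, e3]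
    ring
  rw [key]
  have step3 : 2 * (x^(-(r:ℝ)) * (y^(σ:ℝ) * z^(σ:ℝ))) *
      (x ^ (r-2) * y ^ (2-σ) * z ^ (-σ) * min (z^2) (x*y))
      ≤ 2 * (x^(-(r:ℝ)) * (y^(σ:ℝ) * z^(σ:ℝ))) * (2^σ * x^(-γ)) :=
    myP1_mulstep hcore (by positivity)
  refine step3.trans (le_of_eq ?_)
  have f4 : (2:ℝ)^(σ+1) = 2 * 2^σ := by
    rw [Real.rpow_add two_pos, Real.rpow_one]
    ring
  have f5 : x ^ (-(r:ℝ)) * x ^ (-γ) = x ^ (-γ-r) := myP1_rpmul hx0 _ (by ring)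
  rw [f4, ← f5]
  ring

set_option maxHeartbeats 1000000 in
lemma myP1_weight (β r σ γ : ℝ) (hβ1 : 1/3 ≤ β) (hβ2 : β ≤ 1/2) (hr : 3/2 - β < r)
    (hσ : σ = r + 2*β) (hγ1 : γ ≤ 2*β) (hγ2 : γ ≤ r + 4*β - 2)
    (k k₁ : ℤ) (hk : k ≠ 0) :
    ((k₁:ℝ)^2 / (k:ℝ)^2) * min (((k - k₁ : ℤ):ℝ)^2) |(k:ℝ) * (k₁:ℝ)|
      ≤ 2^(σ+1) * ((1 + (k:ℝ)^2) ^ (-(γ+r)/2) *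
          ((1 + (k₁:ℝ)^2) ^ (σ/2) * (1 + ((k - k₁ : ℤ):ℝ)^2) ^ (σ/2))) := by
  have hc : ((k - k₁ : ℤ):ℝ) = (k:ℝ) - (k₁:ℝ) := by push_cast; ring
  have ha1 : (1:ℝ) ≤ |(k:ℝ)| := by
    have : (1:ℤ) ≤ |k| := Int.one_le_abs hk
    calc (1:ℝ) ≤ ((|k| : ℤ) : ℝ) := by exact_mod_cast this
      _ = |(k:ℝ)| := by push_cast; rfl
  have hx : (1:ℝ) ≤ Real.sqrt (1 + (k:ℝ)^2) := Real.one_le_sqrt.mpr (by nlinarith [sq_nonneg ((k:ℝ))])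
  have hy : (1:ℝ) ≤ Real.sqrt (1 + (k₁:ℝ)^2) := Real.one_le_sqrt.mpr (by nlinarith [sq_nonneg ((k₁:ℝ))])
  have hz : (1:ℝ) ≤ Real.sqrt (1 + ((k:ℝ)-(k₁:ℝ))^2) :=
    Real.one_le_sqrt.mpr (by nlinarith [sq_nonneg ((k:ℝ)-(k₁:ℝ))])
  have hx2 : (Real.sqrt (1 + (k:ℝ)^2))^2 = 1 + (k:ℝ)^2 := Real.sq_sqrt (by positivity)
  have hy2 : (Real.sqrt (1 + (k₁:ℝ)^2))^2 = 1 + (k₁:ℝ)^2 := Real.sq_sqrt (by positivity)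
  have hz2 : (Real.sqrt (1 + ((k:ℝ)-(k₁:ℝ))^2))^2 = 1 + ((k:ℝ)-(k₁:ℝ))^2 :=
    Real.sq_sqrt (by positivity)
  have htx : Real.sqrt (1 + (k:ℝ)^2)
      ≤ Real.sqrt (1 + (k₁:ℝ)^2) + Real.sqrt (1 + ((k:ℝ)-(k₁:ℝ))^2) := by
    have := myP1_sqrt_triangle (k₁:ℝ) ((k:ℝ)-(k₁:ℝ))
    rwa [show (k₁:ℝ) + ((k:ℝ)-(k₁:ℝ)) = (k:ℝ) by ring] at this
  have hty : Real.sqrt (1 + (k₁:ℝ)^2)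
      ≤ Real.sqrt (1 + (k:ℝ)^2) + Real.sqrt (1 + ((k:ℝ)-(k₁:ℝ))^2) := by
    have := myP1_sqrt_triangle ((k:ℝ)) (-((k:ℝ)-(k₁:ℝ)))
    rw [show (k:ℝ) + -((k:ℝ)-(k₁:ℝ)) = (k₁:ℝ) by ring] at this
    rwa [show (-((k:ℝ)-(k₁:ℝ)))^2 = ((k:ℝ)-(k₁:ℝ))^2 by ring] at this
  have hmain := myP1_weight_real β r σ γ hβ1 hβ2 hr hσ hγ1 hγ2 (k:ℝ) (k₁:ℝ)
    (Real.sqrt (1 + (k:ℝ)^2)) (Real.sqrt (1 + (k₁:ℝ)^2))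
    (Real.sqrt (1 + ((k:ℝ)-(k₁:ℝ))^2)) hx hy hz hx2 hy2 hz2 ha1 htx hty
  rw [hc]
  refine hmain.trans (le_of_eq ?_)
  congr 1
  have f1 : (1 + (k:ℝ)^2) ^ (-(γ+r)/2) = (Real.sqrt (1 + (k:ℝ)^2)) ^ (-γ-r) := by
    rw [myP1_rpow_sqrt (by positivity : (0:ℝ) ≤ 1 + (k:ℝ)^2) (-(γ+r)/2)]
    congr 1
    ring
  have f2 : (1 + (k₁:ℝ)^2) ^ (σ/2) = (Real.sqrt (1 + (k₁:ℝ)^2)) ^ (σ:ℝ) := by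
    rw [myP1_rpow_sqrt (by positivity : (0:ℝ) ≤ 1 + (k₁:ℝ)^2) (σ/2)]
    congr 1
    ring
  have f3 : (1 + ((k:ℝ)-(k₁:ℝ))^2) ^ (σ/2)
      = (Real.sqrt (1 + ((k:ℝ)-(k₁:ℝ))^2)) ^ (σ:ℝ) := by
    rw [myP1_rpow_sqrt (by positivity : (0:ℝ) ≤ 1 + ((k:ℝ)-(k₁:ℝ))^2) (σ/2)]
    congr 1
    ring
  rw [f1, f2, f3]


lemma myP1_fc_cconj (f : 𝕋 → ℂ) (k : ℤ) :
    fc (cconj f) k = (starRingEnd ℂ) (fc f (-k)) := by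
  unfold fc cconj fourierCoeff
  rw [← integral_conj]
  congr 1
  funext t
  rw [smul_eq_mul, smul_eq_mul, map_mul, neg_neg, ← fourier_neg]

lemma myP1_fc_norm (f : 𝕋 → ℂ) (k : ℤ) : ‖fc (cconj f) k‖ = ‖fc f (-k)‖ := by
  rw [myP1_fc_cconj]
  exact RCLike.norm_conj _


set_option maxHeartbeats 1000000 in
theorem stmt14 (β r : ℝ) (hβ1 : 1/3 ≤ β) (hβ2 : β ≤ 1/2) (hr : 3/2 - β < r) :
    ∃ C > (0:ℝ), ∀ τ : ℝ, 0 < τ → ∀ f : 𝕋 → ℂ, MemH (r + 2*β) f →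
      seqNorm r (P1coef τ f) ≤ C * τ^2 * (sNorm (r + 2*β) f)^2 := by
  set σ : ℝ := r + 2*β with hσdef
  set γ : ℝ := min (2*β) (r + 4*β - 2) with hγdef
  have hγ1 : γ ≤ 2*β := min_le_left _ _
  have hγ2 : γ ≤ r + 4*β - 2 := min_le_right _ _
  have hγhalf : 1/2 < γ := lt_min (by linarith) (by linarith)
  have hS : Summable (fun k : ℤ => (1 + (k:ℝ)^2) ^ (-γ)) := myP1_summable γ hγhalf
  set S : ℝ := ∑' k : ℤ, (1 + (k:ℝ)^2) ^ (-γ) with hSdef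
  have hS0 : 0 ≤ S := tsum_nonneg fun k => Real.rpow_nonneg (by positivity) _
  have hD0 : (0:ℝ) < 2 ^ (σ+3) := Real.rpow_pos_of_pos two_pos _
  refine ⟨2 ^ (σ+3) * (Real.sqrt S + 1), by positivity, ?_⟩
  intro τ hτ f hf
  set A : ℤ → ℝ := fun j => ‖fc (cconj f) j‖ with hAdef
  have hA0 : ∀ j, 0 ≤ A j := fun j => norm_nonneg _
  set b : ℤ → ℝ := fun j => (1 + (j:ℝ)^2) ^ (σ/2) * A j with hbdef
  have hb0 : ∀ j, 0 ≤ b j := fun j => mul_nonneg (Real.rpow_nonneg (by positivity) _) (hA0 j)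
  have hb2eq : ∀ j, b j ^ 2 = (1 + (j:ℝ)^2) ^ σ * A j ^ 2 := by
    intro j
    rw [hbdef]
    rw [mul_pow, ← Real.rpow_natCast ((1 + (j:ℝ)^2) ^ (σ/2)) 2,
      ← Real.rpow_mul (by positivity : (0:ℝ) ≤ 1 + (j:ℝ)^2),
      show σ/2 * ((2:ℕ):ℝ) = σ by push_cast; ring]
  have hcomp : (fun j : ℤ => b j ^ 2)
      = (fun j : ℤ => (1 + (j:ℝ)^2) ^ σ * ‖fc f j‖^2) ∘ (fun j : ℤ => -j) := by
    funext j
    rw [hb2eq j, Function.comp_apply]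
    rw [show A j = ‖fc f (-j)‖ from myP1_fc_norm f j]
    push_cast
    rw [neg_sq]
  have hb2sum : Summable (fun j : ℤ => b j ^ 2) := by
    rw [hcomp]
    exact hf.2.comp_injective neg_injective
  set B : ℝ := ∑' j : ℤ, b j ^ 2 with hBdef
  have hB0 : 0 ≤ B := tsum_nonneg fun j => sq_nonneg _
  have hBeq : B = sNormSq σ f := by
    rw [hBdef, sNormSq, hcomp]
    exact (Equiv.neg ℤ).tsum_eq (fun k : ℤ => (1 + (k:ℝ)^2) ^ σ * ‖fc f k‖^2)
  have hshift : ∀ k : ℤ, Summable (fun j : ℤ => b (k - j) ^ 2) := by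
    intro k
    exact ((Equiv.subLeft k).summable_iff (f := fun j : ℤ => b j ^ 2)).mpr hb2sum
  have hshifteq : ∀ k : ℤ, ∑' j : ℤ, b (k - j) ^ 2 = B := by
    intro k
    exact (Equiv.subLeft k).tsum_eq (fun j : ℤ => b j ^ 2)
  have hprodsum : ∀ k : ℤ, Summable (fun j : ℤ => b j * b (k - j)) := by
    intro k
    apply Summable.of_nonneg_of_le (fun j => mul_nonneg (hb0 j) (hb0 _))
      (fun j => ?_) ((hb2sum.add (hshift k)).div_const 2)
    nlinarith [sq_nonneg (b j - b (k - j))]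
  have hprodle : ∀ k : ℤ, ∑' j : ℤ, b j * b (k - j) ≤ B := by
    intro k
    calc ∑' j : ℤ, b j * b (k - j) ≤ ∑' j : ℤ, (b j ^ 2 + b (k - j) ^ 2)/2 := by
          apply Summable.tsum_le_tsum (fun j => ?_) (hprodsum k) ((hb2sum.add (hshift k)).div_const 2)
          nlinarith [sq_nonneg (b j - b (k - j))]
      _ = (B + B)/2 := by rw [tsum_div_const, Summable.tsum_add hb2sum (hshift k), hshifteq k]
      _ = B := by ring
  -- the coefficient bound
  have hD4 : (2:ℝ) ^ (σ+3) = 4 * 2 ^ (σ+1) := by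
    rw [show σ+3 = (σ+1)+2 by ring, Real.rpow_add two_pos,
      show (2:ℝ)^(2:ℝ) = 4 by
        rw [show (2:ℝ) = ((2:ℕ):ℝ) by norm_num, Real.rpow_natCast]; norm_num]
    push_cast
    ring
  have hck : ∀ k : ℤ, ‖P1coef τ f k‖
      ≤ 2 ^ (σ+3) * τ^2 * (1 + (k:ℝ)^2) ^ (-(γ+r)/2) * B := by
    intro k
    by_cases hk : k = 0
    · simp only [P1coef, if_pos hk, norm_zero]
      have h1 : (0:ℝ) ≤ (1 + (k:ℝ)^2) ^ (-(γ+r)/2) := Real.rpow_nonneg (by positivity) _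
      have h2 : (0:ℝ) ≤ 2 ^ (σ+3) * τ^2 := by positivity
      exact mul_nonneg (mul_nonneg h2 h1) hB0
    · simp only [P1coef]
      rw [if_neg hk]
      set t : ℤ → ℂ := fun k₁ => ((k₁ : ℂ) ^ 2 / (k : ℂ) ^ 2) *
        (∫ s in (0:ℝ)..τ,
          (Complex.exp (-(2 * Complex.I * s * (((k - k₁ : ℤ)) : ℂ) ^ 2)) - 1) *
          (Complex.exp (-(2 * Complex.I * s * (k : ℂ) * (k₁ : ℂ))) - 1)) *
        fc (cconj f) k₁ * fc (cconj f) (k - k₁) with htdef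
    -- termwise bound
      have key : ∀ k₁ : ℤ, ‖t k₁‖ ≤ 2 ^ (σ+3) * τ^2 * (1 + (k:ℝ)^2) ^ (-(γ+r)/2) *
          (b k₁ * b (k - k₁)) := by
        intro k₁
        set p : ℝ := -(2 * ((k - k₁ : ℤ):ℝ)^2) with hpdef
        set q : ℝ := -(2 * ((k:ℝ) * (k₁:ℝ))) with hqdef
        have hint : ‖∫ s in (0:ℝ)..τ,
            (Complex.exp (-(2 * Complex.I * s * (((k - k₁ : ℤ)) : ℂ) ^ 2)) - 1) *
            (Complex.exp (-(2 * Complex.I * s * (k : ℂ) * (k₁ : ℂ))) - 1)‖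
            ≤ 4 * min (((k - k₁ : ℤ):ℝ)^2) |(k:ℝ) * (k₁:ℝ)| * τ^2 := by
          have heq : Set.EqOn
              (fun s : ℝ => (Complex.exp (-(2 * Complex.I * s * (((k - k₁ : ℤ)) : ℂ) ^ 2)) - 1) *
                (Complex.exp (-(2 * Complex.I * s * (k : ℂ) * (k₁ : ℂ))) - 1))
              (fun s : ℝ => (Complex.exp ((↑(p*s)) * Complex.I) - 1) *
                (Complex.exp ((↑(q*s)) * Complex.I) - 1))
              (Set.uIcc 0 τ) := by
            intro s _
            have e1 : -(2 * Complex.I * (s:ℂ) * (((k - k₁ : ℤ)) : ℂ) ^ 2) = (↑(p*s)) * Complex.I := by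
              rw [hpdef]; push_cast; ring
            have e2 : -(2 * Complex.I * (s:ℂ) * (k : ℂ) * (k₁ : ℂ)) = (↑(q*s)) * Complex.I := by
              rw [hqdef]; push_cast; ring
            simp only
            rw [e1, e2]
          rw [intervalIntegral.integral_congr heq]
          have hb := myP1_integral_bound τ p q hτ.le
          have hp : |p| = 2 * ((k - k₁ : ℤ):ℝ)^2 := by
            rw [hpdef, abs_neg, _root_.abs_of_nonneg (by positivity)]
          have hq : |q| = 2 * |(k:ℝ) * (k₁:ℝ)| := by
            rw [hqdef, abs_neg, abs_mul, _root_.abs_of_nonneg (by norm_num : (0:ℝ) ≤ 2)]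
          have hminq : min |p| |q| = 2 * min (((k - k₁ : ℤ):ℝ)^2) |(k:ℝ) * (k₁:ℝ)| := by
            rw [hp, hq]
            rcases le_total (((k - k₁ : ℤ):ℝ)^2) |(k:ℝ) * (k₁:ℝ)| with h | h
            · rw [min_eq_left (by linarith), min_eq_left h]
            · rw [min_eq_right (by linarith), min_eq_right h]
          rw [hminq] at hb
          calc ‖∫ s in (0:ℝ)..τ, (Complex.exp ((↑(p*s)) * Complex.I) - 1) *
                (Complex.exp ((↑(q*s)) * Complex.I) - 1)‖
              ≤ 2 * (2 * min (((k - k₁ : ℤ):ℝ)^2) |(k:ℝ) * (k₁:ℝ)|) * τ^2 := hb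
            _ = 4 * min (((k - k₁ : ℤ):ℝ)^2) |(k:ℝ) * (k₁:ℝ)| * τ^2 := by ring
        have hfracn : ‖((k₁ : ℂ) ^ 2 / (k : ℂ) ^ 2)‖ = (k₁:ℝ)^2 / (k:ℝ)^2 := by
          rw [norm_div, norm_pow, norm_pow, Complex.norm_intCast, Complex.norm_intCast,
            _root_.sq_abs, _root_.sq_abs]
        have hw := myP1_weight β r σ γ hβ1 hβ2 hr hσdef hγ1 hγ2 k k₁ hk
        have hmin0 : (0:ℝ) ≤ min (((k - k₁ : ℤ):ℝ)^2) |(k:ℝ) * (k₁:ℝ)| :=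
          le_min (sq_nonneg _) (abs_nonneg _)
        calc ‖t k₁‖ = ((k₁:ℝ)^2 / (k:ℝ)^2) *
              ‖∫ s in (0:ℝ)..τ,
                (Complex.exp (-(2 * Complex.I * s * (((k - k₁ : ℤ)) : ℂ) ^ 2)) - 1) *
                (Complex.exp (-(2 * Complex.I * s * (k : ℂ) * (k₁ : ℂ))) - 1)‖ *
              A k₁ * A (k - k₁) := by
              rw [htdef]
              simp only
              rw [norm_mul, norm_mul, norm_mul, hfracn, hAdef]
          _ ≤ ((k₁:ℝ)^2 / (k:ℝ)^2) *
              (4 * min (((k - k₁ : ℤ):ℝ)^2) |(k:ℝ) * (k₁:ℝ)| * τ^2) *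
              A k₁ * A (k - k₁) := by
              apply mul_le_mul_of_nonneg_right ?_ (hA0 _)
              apply mul_le_mul_of_nonneg_right ?_ (hA0 _)
              exact mul_le_mul_of_nonneg_left hint (by positivity)
          _ = (4 * τ^2) * (((k₁:ℝ)^2 / (k:ℝ)^2) *
                min (((k - k₁ : ℤ):ℝ)^2) |(k:ℝ) * (k₁:ℝ)|) * (A k₁ * A (k - k₁)) := by
              ring
          _ ≤ (4 * τ^2) * (2^(σ+1) * ((1 + (k:ℝ)^2) ^ (-(γ+r)/2) *
                ((1 + (k₁:ℝ)^2) ^ (σ/2) * (1 + ((k - k₁ : ℤ):ℝ)^2) ^ (σ/2)))) *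
                (A k₁ * A (k - k₁)) := by
              apply mul_le_mul_of_nonneg_right
                (mul_le_mul_of_nonneg_left hw (by positivity))
                (mul_nonneg (hA0 _) (hA0 _))
          _ = 2 ^ (σ+3) * τ^2 * (1 + (k:ℝ)^2) ^ (-(γ+r)/2) * (b k₁ * b (k - k₁)) := by
              rw [hD4, hbdef]
              simp only
              ring
      have hmaj : Summable (fun k₁ : ℤ => 2 ^ (σ+3) * τ^2 * (1 + (k:ℝ)^2) ^ (-(γ+r)/2) *
          (b k₁ * b (k - k₁))) := (hprodsum k).mul_left _
      have hnorm : Summable (fun k₁ : ℤ => ‖t k₁‖) :=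
        Summable.of_nonneg_of_le (fun k₁ => norm_nonneg _) key hmaj
      calc ‖∑' k₁ : ℤ, t k₁‖ ≤ ∑' k₁ : ℤ, ‖t k₁‖ := norm_tsum_le_tsum_norm hnorm
        _ ≤ ∑' k₁ : ℤ, 2 ^ (σ+3) * τ^2 * (1 + (k:ℝ)^2) ^ (-(γ+r)/2) * (b k₁ * b (k - k₁)) :=
            Summable.tsum_le_tsum key hnorm hmaj
        _ = 2 ^ (σ+3) * τ^2 * (1 + (k:ℝ)^2) ^ (-(γ+r)/2) * ∑' k₁ : ℤ, (b k₁ * b (k - k₁)) :=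
            tsum_mul_left
        _ ≤ 2 ^ (σ+3) * τ^2 * (1 + (k:ℝ)^2) ^ (-(γ+r)/2) * B := by
            apply mul_le_mul_of_nonneg_left (hprodle k) (by positivity)
  -- sum the squares
  have hper : ∀ k : ℤ, (1 + (k:ℝ)^2) ^ r * ‖P1coef τ f k‖^2
      ≤ (2 ^ (σ+3) * τ^2 * B)^2 * (1 + (k:ℝ)^2) ^ (-γ) := by
    intro k
    have h2 : ‖P1coef τ f k‖^2
        ≤ (2 ^ (σ+3) * τ^2 * (1 + (k:ℝ)^2) ^ (-(γ+r)/2) * B)^2 :=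
      pow_le_pow_left₀ (norm_nonneg _) (hck k) 2
    have hX0 : (0:ℝ) < 1 + (k:ℝ)^2 := by positivity
    calc (1 + (k:ℝ)^2) ^ r * ‖P1coef τ f k‖^2
        ≤ (1 + (k:ℝ)^2) ^ r * (2 ^ (σ+3) * τ^2 * (1 + (k:ℝ)^2) ^ (-(γ+r)/2) * B)^2 :=
          mul_le_mul_of_nonneg_left h2 (Real.rpow_nonneg hX0.le _)
      _ = (2 ^ (σ+3) * τ^2 * B)^2 *
          ((1 + (k:ℝ)^2) ^ r * ((1 + (k:ℝ)^2) ^ (-(γ+r)/2))^2) := by ring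
      _ = (2 ^ (σ+3) * τ^2 * B)^2 * (1 + (k:ℝ)^2) ^ (-γ) := by
          rw [← Real.rpow_natCast ((1 + (k:ℝ)^2) ^ (-(γ+r)/2)) 2,
            ← Real.rpow_mul hX0.le,
            myP1_rpmul hX0 (-γ) (by push_cast; ring)]
  have hmaj2 : Summable (fun k : ℤ => (2 ^ (σ+3) * τ^2 * B)^2 * (1 + (k:ℝ)^2) ^ (-γ)) :=
    hS.mul_left _
  have hlhs : Summable (fun k : ℤ => (1 + (k:ℝ)^2) ^ r * ‖P1coef τ f k‖^2) :=
    Summable.of_nonneg_of_le (fun k => by positivity) hper hmaj2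
  have hfin : seqNormSq r (P1coef τ f) ≤ (2 ^ (σ+3) * τ^2 * B)^2 * S := by
    rw [seqNormSq]
    calc ∑' k : ℤ, (1 + (k:ℝ)^2) ^ r * ‖P1coef τ f k‖^2
        ≤ ∑' k : ℤ, (2 ^ (σ+3) * τ^2 * B)^2 * (1 + (k:ℝ)^2) ^ (-γ) :=
          Summable.tsum_le_tsum hper hlhs hmaj2
      _ = (2 ^ (σ+3) * τ^2 * B)^2 * S := by rw [tsum_mul_left]
  have hP0 : (0:ℝ) ≤ 2 ^ (σ+3) * τ^2 * B := by positivity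
  have hsq : Real.sqrt ((2 ^ (σ+3) * τ^2 * B)^2 * S)
      = 2 ^ (σ+3) * τ^2 * B * Real.sqrt S := by
    rw [Real.sqrt_mul (sq_nonneg _), Real.sqrt_sq hP0]
  have hsnormsq : (sNorm σ f)^2 = B := by
    have h0 : 0 ≤ sNormSq σ f := by rw [← hBeq]; exact hB0
    rw [sNorm, Real.sq_sqrt h0, hBeq]
  rw [hsnormsq]
  calc seqNorm r (P1coef τ f) = Real.sqrt (seqNormSq r (P1coef τ f)) := rfl
    _ ≤ Real.sqrt ((2 ^ (σ+3) * τ^2 * B)^2 * S) := Real.sqrt_le_sqrt hfin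
    _ = 2 ^ (σ+3) * τ^2 * B * Real.sqrt S := hsq
    _ ≤ 2 ^ (σ+3) * (Real.sqrt S + 1) * τ^2 * B := by nlinarith [Real.sqrt_nonneg S]
end
end

section
/- Let β ∈ [0, 1] and r > 5/2 − β. There exists C = C(r, β) > 0 such that for all τ > 0 and all f ∈ H^{r+2β}(𝕋): ‖P₁^τ(f)‖_r ≤ C τ² ‖f‖_{r+2β}². In particular, taking β = 0: for every r > 5/2, ‖P₁^τ(f)‖_r ≤ C τ² ‖f‖_r² with no loss of regularity. -/
open MeasureTheory Complex

noncomputable section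

local notation "𝕋" => AddCircle (2 * Real.pi)

lemma aux_exp_le_abs (x : ℝ) : ‖Complex.exp ((x:ℂ) * Complex.I) - 1‖ ≤ |x| := by
  have h : ‖Complex.exp ((x:ℂ) * Complex.I) - 1‖ ^ 2 = 2 - 2 * Real.cos x := by
    rw [Complex.exp_mul_I]
    rw [Complex.sq_norm]
    simp [Complex.normSq_apply, Complex.cos_ofReal_re, Complex.sin_ofReal_re]
    nlinarith [Real.sin_sq_add_cos_sq x]
  nlinarith [Real.one_sub_sq_div_two_le_cos (x := x),
    norm_nonneg (Complex.exp ((x:ℂ) * Complex.I) - 1), abs_nonneg x, _root_.sq_abs x]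

lemma aux_exp_le_two (x : ℝ) : ‖Complex.exp ((x:ℂ) * Complex.I) - 1‖ ≤ 2 := by
  calc ‖Complex.exp ((x:ℂ) * Complex.I) - 1‖ ≤ ‖Complex.exp ((x:ℂ) * Complex.I)‖ + ‖(1:ℂ)‖ :=
        norm_sub_le _ _
  _ ≤ 2 := by
      rw [Complex.norm_exp]
      simp
      norm_num [Real.exp_zero]

lemma aux_integral_bound (τ : ℝ) (hτ : 0 ≤ τ) (c d : ℝ) :
    ‖∫ s in (0:ℝ)..τ, (Complex.exp (((c*s : ℝ):ℂ) * Complex.I) - 1) *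
      (Complex.exp (((d*s : ℝ):ℂ) * Complex.I) - 1)‖ ≤ τ^2 * min |c| |d| := by
  set m := min |c| |d| with hm
  have hm0 : 0 ≤ m := le_min (abs_nonneg _) (abs_nonneg _)
  have hbd : ∀ s ∈ Set.uIoc (0:ℝ) τ, ‖(Complex.exp (((c*s : ℝ):ℂ) * Complex.I) - 1) *
      (Complex.exp (((d*s : ℝ):ℂ) * Complex.I) - 1)‖ ≤ 2 * m * s := by
    intro s hs
    rw [Set.uIoc_of_le hτ] at hs
    have hs0 : 0 ≤ s := hs.1.le
    rw [norm_mul]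
    rcases min_cases |c| |d| with ⟨h1, h2⟩ | ⟨h1, h2⟩
    · calc ‖Complex.exp (((c*s : ℝ):ℂ) * Complex.I) - 1‖ *
          ‖Complex.exp (((d*s : ℝ):ℂ) * Complex.I) - 1‖ ≤ |c * s| * 2 := by
            exact mul_le_mul (aux_exp_le_abs _) (aux_exp_le_two _) (norm_nonneg _) (abs_nonneg _)
      _ = 2 * m * s := by rw [abs_mul, _root_.abs_of_nonneg hs0, hm, h1]; ring
    · calc ‖Complex.exp (((c*s : ℝ):ℂ) * Complex.I) - 1‖ *
          ‖Complex.exp (((d*s : ℝ):ℂ) * Complex.I) - 1‖ ≤ 2 * |d * s| := by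
            exact mul_le_mul (aux_exp_le_two _) (aux_exp_le_abs _) (norm_nonneg _) (by norm_num)
      _ = 2 * m * s := by rw [abs_mul, _root_.abs_of_nonneg hs0, hm, h1]; ring
  have hint : IntervalIntegrable (fun s : ℝ => 2 * m * s) volume 0 τ := by
    apply Continuous.intervalIntegrable; fun_prop
  have h1 := intervalIntegral.norm_integral_le_abs_of_norm_le
    (f := fun s : ℝ => (Complex.exp (((c*s : ℝ):ℂ) * Complex.I) - 1) *
      (Complex.exp (((d*s : ℝ):ℂ) * Complex.I) - 1))
    (g := fun s : ℝ => 2 * m * s) (μ := volume) (a := 0) (b := τ)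
    ((ae_restrict_mem measurableSet_uIoc).mono hbd) hint
  have h2 : (∫ s in (0:ℝ)..τ, 2 * m * s) = m * τ^2 := by
    rw [intervalIntegral.integral_const_mul, integral_id]
    ring
  rw [h2] at h1
  calc ‖_‖ ≤ |m * τ^2| := h1
  _ = τ^2 * m := by rw [_root_.abs_of_nonneg (by positivity : (0:ℝ) ≤ m * τ^2)]; ring

lemma sq_rpow_half (x p : ℝ) (hx : 0 ≤ x) : (x^2) ^ (p/2) = x ^ p := by
  rw [← Real.rpow_natCast x 2, ← Real.rpow_mul hx]
  norm_num
  congr 1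
  ring

lemma rpow_le_brpow (y p q : ℝ) (hy : 0 ≤ y) (hp : 0 ≤ p) (hpq : p ≤ q) :
    y ^ p ≤ (1 + y^2) ^ (q/2) := by
  have h1 : (1:ℝ) ≤ 1 + y^2 := by nlinarith
  calc y ^ p ≤ (1+y^2) ^ (p/2) := by
        rw [← sq_rpow_half y p hy]
        exact Real.rpow_le_rpow (by positivity) (by nlinarith) (by linarith)
  _ ≤ (1+y^2) ^ (q/2) := Real.rpow_le_rpow_of_exponent_le h1 (by linarith)

lemma star_real (r α x y z : ℝ) (hr : 3/2 < r) (hrα : r ≤ α) (hα2 : 2 ≤ α)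
    (hx : 1 ≤ x) (hy : 1 ≤ y) (hz : 1 ≤ z) (hxyz : x ≤ y + z) :
    (1+x^2)^(r/2) * (y^2/x^2) * min (z^2) (x*y) ≤
      2^(3*r/2) * (y^2 * (1+z^2)^(α/2) + (1+y^2)^(α/2) * z^2) := by
  have hx0 : (0:ℝ) < x := by linarith
  have hy0 : (0:ℝ) < y := by linarith
  have hz0 : (0:ℝ) < z := by linarith
  have hmin0 : 0 ≤ min (z^2) (x*y) := le_min (by positivity) (by positivity)
  have hA : (1+x^2)^(r/2) ≤ 2^(r/2) * x^r := by
    calc (1+x^2)^(r/2) ≤ (2*x^2)^(r/2) :=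
          Real.rpow_le_rpow (by positivity) (by nlinarith) (by linarith)
    _ = 2^(r/2) * x^r := by
        rw [Real.mul_rpow (by norm_num) (by positivity), sq_rpow_half x r hx0.le]
  have hxr2 : x^r = x^(r-2) * x^2 := by
    rw [← Real.rpow_natCast x 2, ← Real.rpow_add hx0]
    norm_num
  have hstep : (1+x^2)^(r/2) * (y^2/x^2) * min (z^2) (x*y) ≤
      2^(r/2) * x^(r-2) * (y^2 * min (z^2) (x*y)) := by
    calc (1+x^2)^(r/2) * (y^2/x^2) * min (z^2) (x*y)
        ≤ (2^(r/2) * x^r) * (y^2/x^2) * min (z^2) (x*y) :=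
          mul_le_mul_of_nonneg_right (mul_le_mul_of_nonneg_right hA (by positivity)) hmin0
    _ = 2^(r/2) * x^(r-2) * (y^2 * min (z^2) (x*y)) := by
          rw [hxr2]; field_simp
  rcases le_total z y with hzy | hzy
  · -- z ≤ y, x ≤ 2y, use min ≤ z², bound by second summand
    have hx2y : x ≤ 2*y := by linarith
    have hkey : x^(r-2) * y^2 ≤ 2^r * (1+y^2)^(α/2) := by
      rcases le_total 2 r with h2r | h2r
      · have h1 : x^(r-2) ≤ 2^(r-2) * y^(r-2) := by
          calc x^(r-2) ≤ (2*y)^(r-2) :=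
                Real.rpow_le_rpow hx0.le hx2y (by linarith)
          _ = 2^(r-2) * y^(r-2) := Real.mul_rpow (by norm_num) hy0.le
        have h2 : y^(r-2) * y^2 = y^r := by
          rw [← Real.rpow_natCast y 2, ← Real.rpow_add hy0]; norm_num
        calc x^(r-2) * y^2 ≤ (2^(r-2) * y^(r-2)) * y^2 :=
              mul_le_mul_of_nonneg_right h1 (by positivity)
        _ = 2^(r-2) * y^r := by rw [mul_assoc, h2]
        _ ≤ 2^r * (1+y^2)^(α/2) := by
            apply mul_le_mul ?_ (rpow_le_brpow y r α hy0.le (by linarith) hrα)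
              (by positivity) (by positivity)
            exact Real.rpow_le_rpow_of_exponent_le one_le_two (by linarith)
      · have h1 : x^(r-2) ≤ 1 := Real.rpow_le_one_of_one_le_of_nonpos hx (by linarith)
        have h2 : y^2 ≤ (1+y^2)^(α/2) := by
          have h2' := rpow_le_brpow y 2 α hy0.le (by norm_num) hα2
          rw [show y^(2:ℝ) = y^(2:ℕ) by rw [← Real.rpow_natCast y 2]; norm_num] at h2'
          exact h2'

        calc x^(r-2) * y^2 ≤ 1 * (1+y^2)^(α/2) := by
              apply mul_le_mul h1 h2 (by positivity) (by norm_num)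
        _ ≤ 2^r * (1+y^2)^(α/2) := by
            apply mul_le_mul_of_nonneg_right ?_ (by positivity)
            calc (1:ℝ) = 2^(0:ℝ) := by norm_num
            _ ≤ 2^r := Real.rpow_le_rpow_of_exponent_le one_le_two (by linarith)
    calc (1+x^2)^(r/2) * (y^2/x^2) * min (z^2) (x*y)
        ≤ 2^(r/2) * x^(r-2) * (y^2 * z^2) := by
          refine hstep.trans ?_
          have : y^2 * min (z^2) (x*y) ≤ y^2 * z^2 :=
            mul_le_mul_of_nonneg_left (min_le_left _ _) (by positivity)
          exact mul_le_mul_of_nonneg_left this (by positivity)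
    _ = (x^(r-2) * y^2) * (2^(r/2) * z^2) := by ring
    _ ≤ (2^r * (1+y^2)^(α/2)) * (2^(r/2) * z^2) :=
          mul_le_mul_of_nonneg_right hkey (by positivity)
    _ = (2^r * 2^(r/2)) * ((1+y^2)^(α/2) * z^2) := by ring
    _ ≤ 2^(3*r/2) * ((1+y^2)^(α/2) * z^2) := by
          apply mul_le_mul_of_nonneg_right ?_ (by positivity)
          rw [← Real.rpow_add (by norm_num : (0:ℝ) < 2)]
          exact Real.rpow_le_rpow_of_exponent_le one_le_two (by linarith)
    _ ≤ 2^(3*r/2) * (y^2 * (1+z^2)^(α/2) + (1+y^2)^(α/2) * z^2) := by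
          apply mul_le_mul_of_nonneg_left ?_ (by positivity)
          apply le_add_of_nonneg_left
          positivity
  · -- y ≤ z, x ≤ 2z, use min ≤ x*y, bound by first summand
    have hx2z : x ≤ 2*z := by linarith
    have h1 : x^(r-2) * x = x^(r-1) := by
      calc x^(r-2) * x = x^(r-2) * x^(1:ℝ) := by rw [Real.rpow_one]
      _ = x^(r-1) := by rw [← Real.rpow_add hx0]; congr 1; ring
    have h2 : x^(r-1) ≤ 2^(r-1) * z^(r-1) := by
      calc x^(r-1) ≤ (2*z)^(r-1) := Real.rpow_le_rpow hx0.le hx2z (by linarith)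
      _ = 2^(r-1) * z^(r-1) := Real.mul_rpow (by norm_num) hz0.le
    have h3 : z^(r-1) * z = z^r := by
      calc z^(r-1) * z = z^(r-1) * z^(1:ℝ) := by rw [Real.rpow_one]
      _ = z^r := by rw [← Real.rpow_add hz0]; congr 1; ring
    calc (1+x^2)^(r/2) * (y^2/x^2) * min (z^2) (x*y)
        ≤ 2^(r/2) * x^(r-2) * (y^2 * (x*y)) := by
          refine hstep.trans ?_
          have : y^2 * min (z^2) (x*y) ≤ y^2 * (x*y) :=
            mul_le_mul_of_nonneg_left (min_le_right _ _) (by positivity)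
          exact mul_le_mul_of_nonneg_left this (by positivity)
    _ = 2^(r/2) * (x^(r-2) * x) * (y^2 * y) := by ring
    _ = 2^(r/2) * x^(r-1) * (y^2 * y) := by rw [h1]
    _ ≤ 2^(r/2) * (2^(r-1) * z^(r-1)) * (y^2 * z) := by
          apply mul_le_mul
          · exact mul_le_mul_of_nonneg_left h2 (by positivity)
          · exact mul_le_mul_of_nonneg_left hzy (by positivity)
          · positivity
          · positivity
    _ = (2^(r/2) * 2^(r-1)) * (y^2 * (z^(r-1) * z)) := by ring
    _ = (2^(r/2) * 2^(r-1)) * (y^2 * z^r) := by rw [h3]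
    _ ≤ 2^(3*r/2) * (y^2 * (1+z^2)^(α/2)) := by
          apply mul_le_mul
          · rw [← Real.rpow_add (by norm_num : (0:ℝ) < 2)]
            exact Real.rpow_le_rpow_of_exponent_le one_le_two (by linarith)
          · exact mul_le_mul_of_nonneg_left
              (rpow_le_brpow z r α hz0.le (by linarith) hrα) (by positivity)
          · positivity
          · positivity
    _ ≤ 2^(3*r/2) * (y^2 * (1+z^2)^(α/2) + (1+y^2)^(α/2) * z^2) := by
          apply mul_le_mul_of_nonneg_left ?_ (by positivity)
          apply le_add_of_nonneg_right
          positivity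

open ENNReal in
lemma ennreal_mul_le_sq_add_sq (a b : ℝ≥0∞) : a * b ≤ a^2 + b^2 := by
  rcases le_total a b with h | h
  · calc a * b ≤ b * b := mul_le_mul_left h b
    _ = b^2 := (sq b).symm
    _ ≤ a^2 + b^2 := le_add_self
  · calc a * b ≤ a * a := mul_le_mul_right h a
    _ = a^2 := (sq a).symm
    _ ≤ a^2 + b^2 := le_self_add

open ENNReal in
lemma tsum_tsum_mul_ennreal (f g : ℤ → ℝ≥0∞) :
    ∑' (j : ℤ), ∑' (i : ℤ), f j * g i = (∑' j, f j) * (∑' i, g i) := by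
  rw [← ENNReal.tsum_mul_right]
  exact tsum_congr fun j => ENNReal.tsum_mul_left

open ENNReal in
lemma ennreal_cs (u v : ℤ → ℝ≥0∞) :
    (∑' j, u j * v j)^2 ≤ 2 * (∑' j, u j^2) * (∑' j, v j^2) := by
  have expand : (∑' j, u j * v j)^2 = ∑' (j : ℤ), ∑' (i : ℤ), (u j * v j) * (u i * v i) := by
    rw [sq, ← ENNReal.tsum_mul_right]
    exact tsum_congr fun j => (ENNReal.tsum_mul_left).symm
  rw [expand]
  have hbd : ∀ j i : ℤ, (u j * v j) * (u i * v i) ≤ u j^2 * v i^2 + u i^2 * v j^2 := by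
    intro j i
    calc (u j * v j) * (u i * v i) = (u j * v i) * (u i * v j) := by ring
    _ ≤ (u j * v i)^2 + (u i * v j)^2 := ennreal_mul_le_sq_add_sq _ _
    _ = u j^2 * v i^2 + u i^2 * v j^2 := by ring
  calc ∑' (j : ℤ), ∑' (i : ℤ), (u j * v j) * (u i * v i)
      ≤ ∑' (j : ℤ), ∑' (i : ℤ), (u j^2 * v i^2 + v j^2 * u i^2) := by
        refine ENNReal.tsum_le_tsum fun j => ENNReal.tsum_le_tsum fun i => ?_
        exact (hbd j i).trans (le_of_eq (by ring))
  _ = ∑' (j : ℤ), ∑' (i : ℤ), u j^2 * v i^2 + ∑' (j : ℤ), ∑' (i : ℤ), v j^2 * u i^2 := by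
        rw [← ENNReal.tsum_add]
        exact tsum_congr fun j => ENNReal.tsum_add
  _ = (∑' j, u j^2) * (∑' j, v j^2) + (∑' j, v j^2) * (∑' j, u j^2) := by
        rw [tsum_tsum_mul_ennreal, tsum_tsum_mul_ennreal]
  _ = 2 * (∑' j, u j^2) * (∑' j, v j^2) := by ring

open ENNReal in
lemma ennreal_young (u v : ℤ → ℝ≥0∞) :
    ∑' k, (∑' j, u j * v (k - j))^2 ≤ 2 * (∑' j, u j)^2 * (∑' j, v j^2) := by
  have key : ∀ k : ℤ, (∑' j, u j * v (k - j))^2 ≤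
      2 * (∑' i, u i) * (∑' j, u j * (v (k - j))^2) := by
    intro k
    have expand : (∑' j, u j * v (k-j))^2 =
        ∑' (j : ℤ), ∑' (i : ℤ), (u j * v (k-j)) * (u i * v (k-i)) := by
      rw [sq, ← ENNReal.tsum_mul_right]
      exact tsum_congr fun j => (ENNReal.tsum_mul_left).symm
    rw [expand]
    have hbd : ∀ j i : ℤ, (u j * v (k-j)) * (u i * v (k-i)) ≤
        (u j * (v (k-j))^2) * u i + u j * (u i * (v (k-i))^2) := by
      intro j i
      calc (u j * v (k-j)) * (u i * v (k-i)) = (u j * u i) * (v (k-j) * v (k-i)) := by ring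
      _ ≤ (u j * u i) * ((v (k-j))^2 + (v (k-i))^2) :=
          mul_le_mul_right (ennreal_mul_le_sq_add_sq _ _) _
      _ = (u j * (v (k-j))^2) * u i + u j * (u i * (v (k-i))^2) := by ring
    calc ∑' (j : ℤ), ∑' (i : ℤ), (u j * v (k-j)) * (u i * v (k-i))
        ≤ ∑' (j : ℤ), ∑' (i : ℤ), ((u j * (v (k-j))^2) * u i + u j * (u i * (v (k-i))^2)) :=
          ENNReal.tsum_le_tsum fun j => ENNReal.tsum_le_tsum fun i => hbd j i
    _ = ∑' (j : ℤ), ∑' (i : ℤ), (u j * (v (k-j))^2) * u i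
        + ∑' (j : ℤ), ∑' (i : ℤ), u j * (u i * (v (k-i))^2) := by
          rw [← ENNReal.tsum_add]
          exact tsum_congr fun j => ENNReal.tsum_add
    _ = (∑' j, u j * (v (k-j))^2) * (∑' i, u i)
        + (∑' j, u j) * (∑' i, u i * (v (k-i))^2) := by
          rw [tsum_tsum_mul_ennreal, tsum_tsum_mul_ennreal]
    _ = 2 * (∑' i, u i) * (∑' j, u j * (v (k-j))^2) := by ring
  calc ∑' k, (∑' j, u j * v (k - j))^2
      ≤ ∑' (k : ℤ), 2 * (∑' i, u i) * (∑' j, u j * (v (k - j))^2) :=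
        ENNReal.tsum_le_tsum key
  _ = 2 * (∑' i, u i) * ∑' (k : ℤ), ∑' (j : ℤ), u j * (v (k - j))^2 := ENNReal.tsum_mul_left
  _ = 2 * (∑' i, u i) * ∑' (j : ℤ), ∑' (k : ℤ), u j * (v (k - j))^2 := by rw [ENNReal.tsum_comm]
  _ = 2 * (∑' i, u i) * ∑' (j : ℤ), u j * ∑' (k : ℤ), (v (k - j))^2 := by
        congr 1
        exact tsum_congr fun j => ENNReal.tsum_mul_left
  _ = 2 * (∑' i, u i) * ∑' (j : ℤ), u j * ∑' (k : ℤ), v k^2 := by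
        congr 1
        refine tsum_congr fun j => ?_
        congr 1
        exact (Equiv.subRight j).tsum_eq (fun k => v k^2)
  _ = 2 * (∑' j, u j)^2 * (∑' j, v j^2) := by
        rw [ENNReal.tsum_mul_right]
        ring

open ENNReal NNReal in
lemma nnnorm_tsum_le_ennreal (z : ℤ → ℂ) :
    (‖∑' j, z j‖₊ : ℝ≥0∞) ≤ ∑' j, (‖z j‖₊ : ℝ≥0∞) := by
  by_cases h : Summable fun j => ‖z j‖₊
  · rw [← ENNReal.coe_tsum h, ENNReal.coe_le_coe, ← NNReal.coe_le_coe, coe_nnnorm,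
      NNReal.coe_tsum]
    refine (norm_tsum_le_tsum_norm ?_).trans (le_of_eq ?_)
    · exact (NNReal.summable_coe.2 h).congr fun j => (coe_nnnorm (z j)).symm
    · exact tsum_congr fun j => (coe_nnnorm (z j)).symm
  · have htop : ∑' j, ((‖z j‖₊ : ℝ≥0∞)) = ⊤ := by
      by_contra hne
      exact h (ENNReal.tsum_coe_ne_top_iff_summable.1 hne)
    rw [htop]
    exact le_top

lemma summable_rpow_aux (σ : ℝ) (hσ : 1/2 < σ) :
    Summable (fun j : ℤ => (1+(j:ℝ)^2)^(-σ)) := by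
  have hb : (1:ℝ) < 2*σ := by linarith
  have h1 := Real.summable_abs_int_rpow hb
  have h2 : Summable (fun j : ℤ => if j = 0 then (1:ℝ) else 0) := by
    apply summable_of_ne_finset_zero (s := {(0:ℤ)})
    intro j hj
    simp only [Finset.mem_singleton] at hj
    simp [hj]
  have hg : Summable (fun j : ℤ => |(j:ℝ)|^(-(2*σ)) + (if j = 0 then (1:ℝ) else 0)) :=
    h1.add h2
  apply hg.of_nonneg_of_le (fun j => by positivity)
  intro j
  by_cases hj : j = 0
  · subst hj
    simp [Real.one_rpow]
    positivity
  · have hj1 : (1:ℝ) ≤ |(j:ℝ)| := by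
      rw [← Int.cast_abs]
      exact_mod_cast Int.one_le_abs (by exact_mod_cast hj)
    have hj0 : (0:ℝ) < |(j:ℝ)| := by linarith
    have key : (1+(j:ℝ)^2)^(-σ) ≤ |(j:ℝ)|^(-(2*σ)) := by
      have e1 : |(j:ℝ)|^(-(2*σ)) = (|(j:ℝ)|^2)^((-(2*σ))/2) := by
        rw [sq_rpow_half _ _ hj0.le]
      rw [e1, ← _root_.sq_abs (j:ℝ), show -(2*σ)/2 = -σ by ring]
      apply Real.rpow_le_rpow_of_nonpos (by positivity) (by nlinarith) (by linarith)
    exact key.trans (le_add_of_nonneg_right (by positivity))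

lemma star_int (r α : ℝ) (hr : 3/2 < r) (hrα : r ≤ α) (hα2 : 2 ≤ α) (k j : ℤ) (hk : k ≠ 0)
    (hj : j ≠ 0) (hkj : k - j ≠ 0) :
    (1+(k:ℝ)^2)^(r/2) * ((j:ℝ)^2/(k:ℝ)^2) * min (((k-j:ℤ):ℝ)^2) |(k:ℝ)*(j:ℝ)| ≤
      2^(3*r/2) * ((j:ℝ)^2 * (1+((k-j:ℤ):ℝ)^2)^(α/2) + (1+(j:ℝ)^2)^(α/2) * ((k-j:ℤ):ℝ)^2) := by
  have h1k : (1:ℝ) ≤ |(k:ℝ)| := by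
    rw [← Int.cast_abs]; exact_mod_cast Int.one_le_abs hk
  have h1j : (1:ℝ) ≤ |(j:ℝ)| := by
    rw [← Int.cast_abs]; exact_mod_cast Int.one_le_abs hj
  have h1kj : (1:ℝ) ≤ |((k-j:ℤ):ℝ)| := by
    rw [← Int.cast_abs]; exact_mod_cast Int.one_le_abs hkj
  have htri : |(k:ℝ)| ≤ |(j:ℝ)| + |((k-j:ℤ):ℝ)| := by
    have : (k:ℝ) = (j:ℝ) + ((k-j:ℤ):ℝ) := by push_cast; ring
    rw [this]
    exact abs_add_le _ _
  have h := star_real r α |(k:ℝ)| |(j:ℝ)| |((k-j:ℤ):ℝ)| hr hrα hα2 h1k h1j h1kj htri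
  simp only [_root_.sq_abs, ← abs_mul] at h
  exact h

open scoped ENNReal NNReal

lemma two_min (A B : ℝ) : min (2*A) (2*B) = 2 * min A B := by
  rcases le_total A B with h | h
  · rw [min_eq_left (by linarith), min_eq_left h]
  · rw [min_eq_right (by linarith), min_eq_right h]

lemma fc_conj (f : 𝕋 → ℂ) (n : ℤ) : fc (cconj f) n = (starRingEnd ℂ) (fc f (-n)) := by
  show fourierCoeff (fun x => (starRingEnd ℂ) (f x)) n = (starRingEnd ℂ) (fourierCoeff f (-n))
  rw [fourierCoeff, fourierCoeff, ← integral_conj]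
  congr 1
  funext t
  rw [smul_eq_mul, smul_eq_mul, map_mul, neg_neg, ← fourier_neg]

lemma norm_fc_conj (f : 𝕋 → ℂ) (n : ℤ) : ‖fc (cconj f) n‖ = ‖fc f (-n)‖ := by
  rw [fc_conj]
  simp [Complex.norm_conj]

set_option maxHeartbeats 1000000 in
theorem stmt16 (β r : ℝ) (hβ1 : 0 ≤ β) (hβ2 : β ≤ 1) (hr : 5/2 - β < r) :
    ∃ C > (0:ℝ), ∀ τ : ℝ, 0 < τ → ∀ f : 𝕋 → ℂ, MemH (r + 2*β) f →
      seqNorm r (P1coef τ f) ≤ C * τ^2 * (sNorm (r + 2*β) f)^2 := by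
  set α := r + 2*β with hαdef
  have hr32 : 3/2 < r := by linarith
  have hrα : r ≤ α := by linarith
  have hα52 : 5/2 < α := by linarith
  have hα2 : 2 ≤ α := by linarith
  have hS : Summable (fun j : ℤ => (1+(j:ℝ)^2)^(-(α-2))) :=
    summable_rpow_aux (α-2) (by linarith)
  set S := ∑' (j : ℤ), (1+(j:ℝ)^2)^(-(α-2)) with hSdef
  have hS0 : 0 ≤ S := tsum_nonneg (fun j => by positivity)
  refine ⟨8 * 2^(3*r/2) * Real.sqrt S + 1, by positivity, ?_⟩
  intro τ hτ f hf
  set Q := sNormSq α f with hQdef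
  have hQ0 : 0 ≤ Q := tsum_nonneg (fun k => by positivity)
  set a : ℤ → ℝ := fun j => ‖fc (cconj f) j‖ with hadef
  have ha0 : ∀ j, 0 ≤ a j := fun j => norm_nonneg _
  set w : ℤ → ℝ := fun j => (1+(j:ℝ)^2)^(α/2) with hwdef
  have hw0 : ∀ j, 0 ≤ w j := fun j => by positivity
  set A : ℤ → ℝ≥0∞ := fun j => ENNReal.ofReal (a j) with hAdef
  set Bf : ℤ → ℝ≥0∞ := fun j => ENNReal.ofReal (w j * a j) with hBdef
  set Gf : ℤ → ℝ≥0∞ := fun j => ENNReal.ofReal ((j:ℝ)^2 * (1+(j:ℝ)^2)^(-(α/2))) with hGdef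
  set U : ℤ → ℝ≥0∞ := fun j => Gf j * Bf j with hUdef
  have hU : ∀ j : ℤ, U j = ENNReal.ofReal ((j:ℝ)^2 * a j) := by
    intro j
    rw [hUdef]
    show Gf j * Bf j = _
    rw [hGdef, hBdef, ← ENNReal.ofReal_mul (by positivity)]
    congr 1
    have hc : (1+(j:ℝ)^2)^(-(α/2)) * (1+(j:ℝ)^2)^(α/2) = 1 := by
      rw [← Real.rpow_add (by positivity)]
      rw [show -(α/2) + α/2 = 0 by ring, Real.rpow_zero]
    calc (j:ℝ)^2 * (1+(j:ℝ)^2)^(-(α/2)) * (w j * a j)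
        = ((1+(j:ℝ)^2)^(-(α/2)) * (1+(j:ℝ)^2)^(α/2)) * ((j:ℝ)^2 * a j) := by
          rw [hwdef]; ring
    _ = (j:ℝ)^2 * a j := by rw [hc, one_mul]
  set wr : ℤ → ℝ := fun k => (1+(k:ℝ)^2)^(r/2) with hwrdef
  have hwr0 : ∀ k, 0 ≤ wr k := fun k => by positivity
  set K : ℝ≥0∞ := ENNReal.ofReal (2 * 2^(3*r/2) * τ^2) with hKdef
  set M : ℤ → ℤ → ℝ := fun k j => min (((k-j:ℤ):ℝ)^2) |(k:ℝ)*(j:ℝ)| with hMdef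
  have hM0 : ∀ k j, 0 ≤ M k j := fun k j => le_min (by positivity) (abs_nonneg _)
  -- the summand of P1coef
  set F : ℤ → ℤ → ℂ := fun k j => ((j:ℂ)^2/(k:ℂ)^2) *
      (∫ s in (0:ℝ)..τ,
        (Complex.exp (-(2 * Complex.I * s * (((k - j : ℤ)) : ℂ) ^ 2)) - 1) *
        (Complex.exp (-(2 * Complex.I * s * (k : ℂ) * (j : ℂ))) - 1)) *
      fc (cconj f) j * fc (cconj f) (k - j) with hFdef
  have hP : ∀ k : ℤ, k ≠ 0 → P1coef τ f k = ∑' j : ℤ, F k j := by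
    intro k hk
    rw [P1coef, if_neg hk]
  -- integral bound
  have hIb : ∀ k j : ℤ, ‖∫ s in (0:ℝ)..τ,
        (Complex.exp (-(2 * Complex.I * s * (((k - j : ℤ)) : ℂ) ^ 2)) - 1) *
        (Complex.exp (-(2 * Complex.I * s * (k : ℂ) * (j : ℂ))) - 1)‖ ≤ 2 * τ^2 * M k j := by
    intro k j
    set c : ℝ := -2*((k-j:ℤ):ℝ)^2 with hcdef
    set d : ℝ := -2*((k:ℝ)*(j:ℝ)) with hddef
    have heq : ∀ s : ℝ, (Complex.exp (-(2 * Complex.I * s * (((k - j : ℤ)) : ℂ) ^ 2)) - 1) *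
        (Complex.exp (-(2 * Complex.I * s * (k : ℂ) * (j : ℂ))) - 1)
        = (Complex.exp (((c*s : ℝ):ℂ) * Complex.I) - 1) *
          (Complex.exp (((d*s : ℝ):ℂ) * Complex.I) - 1) := by
      intro s
      congr 2
      · congr 1
        rw [hcdef]; push_cast; ring
      · congr 1
        rw [hddef]; push_cast; ring
    have hrw : (∫ s in (0:ℝ)..τ,
        (Complex.exp (-(2 * Complex.I * s * (((k - j : ℤ)) : ℂ) ^ 2)) - 1) *
        (Complex.exp (-(2 * Complex.I * s * (k : ℂ) * (j : ℂ))) - 1))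
        = ∫ s in (0:ℝ)..τ, (Complex.exp (((c*s : ℝ):ℂ) * Complex.I) - 1) *
          (Complex.exp (((d*s : ℝ):ℂ) * Complex.I) - 1) := by
      apply intervalIntegral.integral_congr
      intro s _
      exact heq s
    rw [hrw]
    refine (aux_integral_bound τ hτ.le c d).trans (le_of_eq ?_)
    have h1 : |c| = 2*((k-j:ℤ):ℝ)^2 := by
      rw [hcdef, show -2*((k-j:ℤ):ℝ)^2 = -(2*((k-j:ℤ):ℝ)^2) by ring, abs_neg,
        _root_.abs_of_nonneg (by positivity : (0:ℝ) ≤ 2*((k-j:ℤ):ℝ)^2)]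
    have h2 : |d| = 2*|(k:ℝ)*(j:ℝ)| := by
      rw [hddef, show -2*((k:ℝ)*(j:ℝ)) = -(2*((k:ℝ)*(j:ℝ))) by ring, abs_neg, abs_mul]
      norm_num
    rw [h1, h2, two_min, hMdef]
    ring
  -- pointwise weight inequality
  have hreal : ∀ k j : ℤ, k ≠ 0 → wr k * ((j:ℝ)^2/(k:ℝ)^2) * M k j ≤
      2^(3*r/2) * ((j:ℝ)^2 * (1+((k-j:ℤ):ℝ)^2)^(α/2) + (1+(j:ℝ)^2)^(α/2) * ((k-j:ℤ):ℝ)^2) := by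
    intro k j hk
    by_cases hj : j = 0
    · subst hj
      have h0 : wr k * (((0:ℤ):ℝ)^2/(k:ℝ)^2) * M k 0 = 0 := by
        norm_num
      rw [h0]
      positivity
    · by_cases hkj : k - j = 0
      · have hM' : M k j = 0 := by
          rw [hMdef]
          show min (((k-j:ℤ):ℝ)^2) _ = 0
          rw [hkj]
          norm_num
          positivity
        rw [hM', mul_zero]
        positivity
      · exact star_int r α hr32 hrα hα2 k j hk hj hkj
  -- termwise ENNReal bound
  have hterm : ∀ k j : ℤ, k ≠ 0 → ENNReal.ofReal (wr k) * (‖F k j‖₊ : ℝ≥0∞) ≤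
      K * (U j * Bf (k-j) + Bf j * U (k-j)) := by
    intro k j hk
    have hnorm : ‖F k j‖ = ((j:ℝ)^2/(k:ℝ)^2) * ‖∫ s in (0:ℝ)..τ,
        (Complex.exp (-(2 * Complex.I * s * (((k - j : ℤ)) : ℂ) ^ 2)) - 1) *
        (Complex.exp (-(2 * Complex.I * s * (k : ℂ) * (j : ℂ))) - 1)‖ * a j * a (k-j) := by
      rw [hFdef]
      simp only [norm_mul, norm_div, norm_pow, Complex.norm_intCast]
      rw [_root_.sq_abs, _root_.sq_abs, hadef]
    have hq0 : (0:ℝ) ≤ (j:ℝ)^2/(k:ℝ)^2 := by positivity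
    have hRHS : wr k * ‖F k j‖ ≤ (2 * 2^(3*r/2) * τ^2) *
        (((j:ℝ)^2 * (1+((k-j:ℤ):ℝ)^2)^(α/2) + (1+(j:ℝ)^2)^(α/2) * ((k-j:ℤ):ℝ)^2) *
          (a j * a (k-j))) := by
      rw [hnorm]
      calc wr k * (((j:ℝ)^2/(k:ℝ)^2) * ‖_‖ * a j * a (k-j))
          ≤ wr k * (((j:ℝ)^2/(k:ℝ)^2) * (2 * τ^2 * M k j) * a j * a (k-j)) := by
            have := hIb k j
            gcongr
      _ = (2 * τ^2) * ((wr k * ((j:ℝ)^2/(k:ℝ)^2) * M k j) * (a j * a (k-j))) := by ring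
      _ ≤ (2 * τ^2) * ((2^(3*r/2) *
            ((j:ℝ)^2 * (1+((k-j:ℤ):ℝ)^2)^(α/2) + (1+(j:ℝ)^2)^(α/2) * ((k-j:ℤ):ℝ)^2)) *
            (a j * a (k-j))) := by
            have h := hreal k j hk
            gcongr
      _ = (2 * 2^(3*r/2) * τ^2) *
            (((j:ℝ)^2 * (1+((k-j:ℤ):ℝ)^2)^(α/2) + (1+(j:ℝ)^2)^(α/2) * ((k-j:ℤ):ℝ)^2) *
            (a j * a (k-j))) := by ring
    have hUB : U j * Bf (k-j) + Bf j * U (k-j) = ENNReal.ofReal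
        ((((j:ℝ)^2 * (1+((k-j:ℤ):ℝ)^2)^(α/2) + (1+(j:ℝ)^2)^(α/2) * ((k-j:ℤ):ℝ)^2)) *
          (a j * a (k-j))) := by
      rw [hU j, hU (k-j), hBdef]
      rw [← ENNReal.ofReal_mul (by positivity), ← ENNReal.ofReal_mul (by positivity),
        ← ENNReal.ofReal_add (by positivity) (by positivity)]
      congr 1
      rw [hwdef]
      push_cast
      ring
    calc ENNReal.ofReal (wr k) * (‖F k j‖₊ : ℝ≥0∞)
        = ENNReal.ofReal (wr k * ‖F k j‖) := by
          rw [ENNReal.ofReal_mul (hwr0 k), ofReal_norm, enorm_eq_nnnorm]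
    _ ≤ ENNReal.ofReal ((2 * 2^(3*r/2) * τ^2) *
        (((j:ℝ)^2 * (1+((k-j:ℤ):ℝ)^2)^(α/2) + (1+(j:ℝ)^2)^(α/2) * ((k-j:ℤ):ℝ)^2) *
          (a j * a (k-j)))) := ENNReal.ofReal_le_ofReal hRHS
    _ = K * (U j * Bf (k-j) + Bf j * U (k-j)) := by
        rw [hUB, hKdef, ← ENNReal.ofReal_mul (by positivity)]
  -- step A
  have stepA : ∀ k : ℤ, k ≠ 0 → ENNReal.ofReal (wr k) * (‖P1coef τ f k‖₊ : ℝ≥0∞) ≤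
      K * ∑' j : ℤ, (U j * Bf (k-j) + Bf j * U (k-j)) := by
    intro k hk
    calc ENNReal.ofReal (wr k) * (‖P1coef τ f k‖₊ : ℝ≥0∞)
        = ENNReal.ofReal (wr k) * (‖∑' j : ℤ, F k j‖₊ : ℝ≥0∞) := by rw [hP k hk]
    _ ≤ ENNReal.ofReal (wr k) * ∑' j : ℤ, (‖F k j‖₊ : ℝ≥0∞) :=
        mul_le_mul_right (nnnorm_tsum_le_ennreal _) _
    _ = ∑' j : ℤ, ENNReal.ofReal (wr k) * (‖F k j‖₊ : ℝ≥0∞) := ENNReal.tsum_mul_left.symm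
    _ ≤ ∑' j : ℤ, K * (U j * Bf (k-j) + Bf j * U (k-j)) :=
        ENNReal.tsum_le_tsum (fun j => hterm k j hk)
    _ = K * ∑' j : ℤ, (U j * Bf (k-j) + Bf j * U (k-j)) := ENNReal.tsum_mul_left
  -- global sums
  set H : ℤ → ℝ≥0∞ := fun k => ∑' j : ℤ, U j * Bf (k - j) with hHdef
  have hHH : ∀ k : ℤ, (∑' j : ℤ, (U j * Bf (k-j) + Bf j * U (k-j))) = 2 * H k := by
    intro k
    rw [ENNReal.tsum_add]
    have h2 : (∑' j : ℤ, Bf j * U (k-j)) = H k := by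
      rw [hHdef]
      have he := (Equiv.subLeft k).tsum_eq (fun j => Bf j * U (k - j))
      rw [← he]
      refine tsum_congr fun i => ?_
      simp only [Equiv.subLeft_apply, sub_sub_cancel]
      ring
    rw [h2, hHdef, two_mul]
  have hT : ∑' k : ℤ, (ENNReal.ofReal (wr k) * (‖P1coef τ f k‖₊ : ℝ≥0∞))^2 ≤
      K^2 * (4 * ∑' k : ℤ, (H k)^2) := by
    calc ∑' k : ℤ, (ENNReal.ofReal (wr k) * (‖P1coef τ f k‖₊ : ℝ≥0∞))^2
        ≤ ∑' k : ℤ, (K * (2 * H k))^2 := by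
          refine ENNReal.tsum_le_tsum fun k => ?_
          by_cases hk : k = 0
          · subst hk
            have h0 : P1coef τ f 0 = 0 := by rw [P1coef]; simp
            rw [h0]
            simp
          · have hs := stepA k hk
            rw [hHH k] at hs
            exact pow_le_pow_left' hs 2
    _ = ∑' k : ℤ, (K^2 * 4) * (H k)^2 := tsum_congr fun k => by ring
    _ = (K^2 * 4) * ∑' k : ℤ, (H k)^2 := ENNReal.tsum_mul_left
    _ = K^2 * (4 * ∑' k : ℤ, (H k)^2) := by ring
  have hYoung : ∑' k : ℤ, (H k)^2 ≤ 2 * (∑' j : ℤ, U j)^2 * (∑' j : ℤ, (Bf j)^2) :=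
    ennreal_young U Bf
  have hCS : (∑' j : ℤ, U j)^2 ≤ 2 * (∑' j : ℤ, (Gf j)^2) * (∑' j : ℤ, (Bf j)^2) :=
    ennreal_cs Gf Bf
  have hGS : ∑' j : ℤ, (Gf j)^2 ≤ ENNReal.ofReal S := by
    have hterm2 : ∀ j : ℤ, (Gf j)^2 ≤ ENNReal.ofReal ((1+(j:ℝ)^2)^(-(α-2))) := by
      intro j
      rw [hGdef]
      rw [← ENNReal.ofReal_pow (by positivity)]
      apply ENNReal.ofReal_le_ofReal
      have h1 : ((j:ℝ)^2 * (1+(j:ℝ)^2)^(-(α/2)))^2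
          = ((j:ℝ)^2)^2 * ((1+(j:ℝ)^2)^(-(α/2)))^2 := by ring
      have h2 : ((1+(j:ℝ)^2)^(-(α/2)))^2 = (1+(j:ℝ)^2)^(-α) := by
        rw [← Real.rpow_natCast ((1+(j:ℝ)^2)^(-(α/2))) 2, ← Real.rpow_mul (by positivity)]
        congr 1; push_cast; ring
      rw [h1, h2]
      have h3 : ((j:ℝ)^2)^2 ≤ (1+(j:ℝ)^2)^(2:ℕ) := by
        nlinarith [sq_nonneg ((j:ℝ)^2), sq_nonneg (j:ℝ)]
      calc ((j:ℝ)^2)^2 * (1+(j:ℝ)^2)^(-α) ≤ (1+(j:ℝ)^2)^(2:ℕ) * (1+(j:ℝ)^2)^(-α) :=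
            mul_le_mul_of_nonneg_right h3 (by positivity)
      _ = (1+(j:ℝ)^2)^(-(α-2)) := by
            rw [← Real.rpow_natCast (1+(j:ℝ)^2) 2, ← Real.rpow_add (by positivity)]
            congr 1; push_cast; ring
    calc ∑' j : ℤ, (Gf j)^2 ≤ ∑' j : ℤ, ENNReal.ofReal ((1+(j:ℝ)^2)^(-(α-2))) :=
          ENNReal.tsum_le_tsum hterm2
    _ = ENNReal.ofReal S := by
        rw [hSdef, ENNReal.ofReal_tsum_of_nonneg (fun j => by positivity) hS]
  have hBS : ∑' j : ℤ, (Bf j)^2 = ENNReal.ofReal Q := by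
    have h1 : ∀ j : ℤ, (Bf j)^2 = ENNReal.ofReal ((1+((-j:ℤ):ℝ)^2)^α * ‖fc f (-j)‖^2) := by
      intro j
      rw [hBdef, ← ENNReal.ofReal_pow (by positivity)]
      congr 1
      have hw2 : (w j)^2 = (1+(j:ℝ)^2)^α := by
        rw [hwdef, ← Real.rpow_natCast ((1+(j:ℝ)^2)^(α/2)) 2, ← Real.rpow_mul (by positivity)]
        congr 1; push_cast; ring
      have haj : a j = ‖fc f (-j)‖ := by rw [hadef]; exact norm_fc_conj f j
      have hc : ((-j:ℤ):ℝ)^2 = (j:ℝ)^2 := by push_cast; ring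
      calc (w j * a j)^2 = (w j)^2 * (a j)^2 := by ring
      _ = (1+((-j:ℤ):ℝ)^2)^α * ‖fc f (-j)‖^2 := by rw [hw2, haj, hc]
    calc ∑' j : ℤ, (Bf j)^2
        = ∑' j : ℤ, ENNReal.ofReal ((1+((-j:ℤ):ℝ)^2)^α * ‖fc f (-j)‖^2) := tsum_congr h1
    _ = ∑' k : ℤ, ENNReal.ofReal ((1+(k:ℝ)^2)^α * ‖fc f k‖^2) :=
        (Equiv.neg ℤ).tsum_eq (fun k => ENNReal.ofReal ((1+(k:ℝ)^2)^α * ‖fc f k‖^2))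
    _ = ENNReal.ofReal Q := by
        rw [hQdef]
        exact (ENNReal.ofReal_tsum_of_nonneg (fun k => by positivity) hf.2).symm
  set Mfin := (8 * 2^(3*r/2) * Real.sqrt S * τ^2 * Q)^2 with hMfin
  have hMfin0 : 0 ≤ Mfin := by positivity
  have hTM : ∑' k : ℤ, (ENNReal.ofReal (wr k) * (‖P1coef τ f k‖₊ : ℝ≥0∞))^2 ≤
      ENNReal.ofReal Mfin := by
    calc ∑' k : ℤ, (ENNReal.ofReal (wr k) * (‖P1coef τ f k‖₊ : ℝ≥0∞))^2
        ≤ K^2 * (4 * ∑' k : ℤ, (H k)^2) := hT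
    _ ≤ K^2 * (4 * (2 * (∑' j : ℤ, U j)^2 * (∑' j : ℤ, (Bf j)^2))) := by gcongr
    _ ≤ K^2 * (4 * (2 * (2 * (∑' j : ℤ, (Gf j)^2) * (∑' j : ℤ, (Bf j)^2))
          * (∑' j : ℤ, (Bf j)^2))) := by gcongr
    _ ≤ K^2 * (4 * (2 * (2 * ENNReal.ofReal S * ENNReal.ofReal Q) * ENNReal.ofReal Q)) := by
          rw [hBS]
          gcongr
    _ = (16:ℝ≥0∞) * K^2 * ENNReal.ofReal S * ENNReal.ofReal Q * ENNReal.ofReal Q := by ring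
    _ = ENNReal.ofReal Mfin := by
        rw [hKdef, ← ENNReal.ofReal_pow (by positivity),
          show ((16:ℝ≥0∞)) = ENNReal.ofReal 16 from (ENNReal.ofReal_ofNat 16).symm,
          ← ENNReal.ofReal_mul (by norm_num),
          ← ENNReal.ofReal_mul (by positivity),
          ← ENNReal.ofReal_mul (by positivity),
          ← ENNReal.ofReal_mul (by positivity)]
        congr 1
        rw [hMfin]
        have hsq : Real.sqrt S ^ 2 = S := Real.sq_sqrt hS0
        rw [show (8 * 2^(3*r/2) * Real.sqrt S * τ^2 * Q)^2
            = 16*(2*2^(3*r/2)*τ^2)^2 * (Real.sqrt S^2) * Q * Q from by ring, hsq]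
  have hseq : seqNormSq r (P1coef τ f) ≤ Mfin := by
    apply tsum_le_of_sum_le' hMfin0
    intro s
    have hof : ENNReal.ofReal (∑ k ∈ s, (1+(k:ℝ)^2)^r * ‖P1coef τ f k‖^2) =
        ∑ k ∈ s, (ENNReal.ofReal (wr k) * (‖P1coef τ f k‖₊ : ℝ≥0∞))^2 := by
      rw [ENNReal.ofReal_sum_of_nonneg (fun k _ => by positivity)]
      refine Finset.sum_congr rfl fun k _ => ?_
      have hh : ((1+(k:ℝ)^2)^(r/2))^2 = (1+(k:ℝ)^2)^r := by
        rw [← Real.rpow_natCast ((1+(k:ℝ)^2)^(r/2)) 2, ← Real.rpow_mul (by positivity)]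
        congr 1; push_cast; ring
      have h1 : (1+(k:ℝ)^2)^r * ‖P1coef τ f k‖^2 = (wr k * ‖P1coef τ f k‖)^2 := by
        rw [hwrdef, mul_pow, hh]
      rw [h1, ENNReal.ofReal_pow (by positivity), ENNReal.ofReal_mul (hwr0 k),
        ofReal_norm, enorm_eq_nnnorm]
    have hchain : ENNReal.ofReal (∑ k ∈ s, (1+(k:ℝ)^2)^r * ‖P1coef τ f k‖^2) ≤
        ENNReal.ofReal Mfin := by
      rw [hof]
      exact (ENNReal.sum_le_tsum s).trans hTM
    exact (ENNReal.ofReal_le_ofReal_iff hMfin0).1 hchain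
  have hQs : (sNorm α f)^2 = Q := Real.sq_sqrt hQ0
  calc seqNorm r (P1coef τ f) = Real.sqrt (seqNormSq r (P1coef τ f)) := rfl
  _ ≤ Real.sqrt Mfin := Real.sqrt_le_sqrt hseq
  _ = |8 * 2^(3*r/2) * Real.sqrt S * τ^2 * Q| := by rw [hMfin, Real.sqrt_sq_eq_abs]
  _ = 8 * 2^(3*r/2) * Real.sqrt S * τ^2 * Q := _root_.abs_of_nonneg (by positivity)
  _ ≤ (8 * 2^(3*r/2) * Real.sqrt S + 1) * τ^2 * Q := by
      have h1 : (8 * 2^(3*r/2) * Real.sqrt S) * τ^2 ≤ (8 * 2^(3*r/2) * Real.sqrt S + 1) * τ^2 :=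
        mul_le_mul_of_nonneg_right (by linarith) (sq_nonneg τ)
      exact mul_le_mul_of_nonneg_right h1 hQ0
  _ = (8 * 2^(3*r/2) * Real.sqrt S + 1) * τ^2 * (sNorm α f)^2 := by rw [hQs]
end
end
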